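/- arXiv:1812.10351 — 10 statements merged into one kernel-verified Lean document; each statement's English description precedes it below -/
import Mathlib

section
/- For every positive integer n, the sum over k from 0 to n-1 of (11k^2+13k+4)·β_k is divisible by 2n^2, where β_k = Σ_{j=0}^{k} C(k,j)^2·C(k+j,j). -/
def apheryBeta (k : ℕ) : ℕ := ∑ j ∈ Finset.range (k + 1), (Nat.choose k j) ^ 2 * Nat.choose (k + j) j

open Nat Finset

def bT (n j : ℕ) : ℕ := (Nat.choose n j) ^ 2 * Nat.choose (n + j) j

def bH (m j : ℕ) : ℤ :=
  ((Nat.choose (m+1) j : ℤ))^2 * (Nat.choose (m+1+j) j : ℤ)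
    * ((j:ℤ)^2 + (6*(m:ℤ)+9)*(j:ℤ) - (11*(m:ℤ)^2+31*(m:ℤ)+22))


lemma key_main (i d : ℕ) :
    ((i:ℚ)+d+3)^2 * ((Nat.choose (i+d+3) (i+1) : ℚ))^2 * (Nat.choose (2*i+d+4) (i+1) : ℚ)
      - (11*((i:ℚ)+d+1)^2+33*((i:ℚ)+d+1)+25) * ((Nat.choose (i+d+2) (i+1) : ℚ))^2 * (Nat.choose (2*i+d+3) (i+1) : ℚ)
      - ((i:ℚ)+d+2)^2 * ((Nat.choose (i+d+1) (i+1) : ℚ))^2 * (Nat.choose (2*i+d+2) (i+1) : ℚ)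
    = ((Nat.choose (i+d+2) (i+1) : ℚ))^2 * (Nat.choose (2*i+d+3) (i+1) : ℚ)
        * (((i:ℚ)+1)^2 + (6*((i:ℚ)+d+1)+9)*((i:ℚ)+1) - (11*((i:ℚ)+d+1)^2+31*((i:ℚ)+d+1)+22))
      - ((Nat.choose (i+d+2) i : ℚ))^2 * (Nat.choose (2*i+d+2) i : ℚ)
        * (((i:ℚ))^2 + (6*((i:ℚ)+d+1)+9)*(i:ℚ) - (11*((i:ℚ)+d+1)^2+31*((i:ℚ)+d+1)+22)) := by
  have hc1 : (Nat.choose (i+d+3) (i+1) : ℚ) = (i+d+3)! / ((i+1)! * (d+2)!) := by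
    rw [Nat.cast_choose ℚ (by omega), show i+d+3-(i+1) = d+2 by omega]
  have hc2 : (Nat.choose (2*i+d+4) (i+1) : ℚ) = (2*i+d+4)! / ((i+1)! * (i+d+3)!) := by
    rw [Nat.cast_choose ℚ (by omega), show 2*i+d+4-(i+1) = i+d+3 by omega]
  have hc3 : (Nat.choose (i+d+2) (i+1) : ℚ) = (i+d+2)! / ((i+1)! * (d+1)!) := by
    rw [Nat.cast_choose ℚ (by omega), show i+d+2-(i+1) = d+1 by omega]
  have hc4 : (Nat.choose (2*i+d+3) (i+1) : ℚ) = (2*i+d+3)! / ((i+1)! * (i+d+2)!) := by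
    rw [Nat.cast_choose ℚ (by omega), show 2*i+d+3-(i+1) = i+d+2 by omega]
  have hc5 : (Nat.choose (i+d+1) (i+1) : ℚ) = (i+d+1)! / ((i+1)! * d !) := by
    rw [Nat.cast_choose ℚ (by omega), show i+d+1-(i+1) = d by omega]
  have hc6 : (Nat.choose (2*i+d+2) (i+1) : ℚ) = (2*i+d+2)! / ((i+1)! * (i+d+1)!) := by
    rw [Nat.cast_choose ℚ (by omega), show 2*i+d+2-(i+1) = i+d+1 by omega]
  have hc7 : (Nat.choose (i+d+2) i : ℚ) = (i+d+2)! / (i ! * (d+2)!) := by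
    rw [Nat.cast_choose ℚ (by omega), show i+d+2-i = d+2 by omega]
  have hc8 : (Nat.choose (2*i+d+2) i : ℚ) = (2*i+d+2)! / (i ! * (i+d+2)!) := by
    rw [Nat.cast_choose ℚ (by omega), show 2*i+d+2-i = i+d+2 by omega]
  have hf1 : ((i+d+3)! : ℚ) = ((i:ℚ)+d+3) * (((i:ℚ)+d+2) * (i+d+1)!) := by
    rw [show i+d+3 = (i+d+2)+1 by omega, Nat.factorial_succ,
        show i+d+2 = (i+d+1)+1 by omega, Nat.factorial_succ]; push_cast; ring
  have hf2 : ((i+d+2)! : ℚ) = ((i:ℚ)+d+2) * (i+d+1)! := by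
    rw [show i+d+2 = (i+d+1)+1 by omega, Nat.factorial_succ]; push_cast; ring
  have hf3 : ((2*i+d+4)! : ℚ) = (2*(i:ℚ)+d+4) * ((2*(i:ℚ)+d+3) * (2*i+d+2)!) := by
    rw [show 2*i+d+4 = (2*i+d+3)+1 by omega, Nat.factorial_succ,
        show 2*i+d+3 = (2*i+d+2)+1 by omega, Nat.factorial_succ]; push_cast; ring
  have hf4 : ((2*i+d+3)! : ℚ) = (2*(i:ℚ)+d+3) * (2*i+d+2)! := by
    rw [show 2*i+d+3 = (2*i+d+2)+1 by omega, Nat.factorial_succ]; push_cast; ring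
  have hf5 : ((i+1)! : ℚ) = ((i:ℚ)+1) * i ! := by
    rw [Nat.factorial_succ]; push_cast; ring
  have hf6 : ((d+2)! : ℚ) = ((d:ℚ)+2) * (((d:ℚ)+1) * d !) := by
    rw [show d+2 = (d+1)+1 by omega, Nat.factorial_succ, Nat.factorial_succ]; push_cast; ring
  have hf7 : ((d+1)! : ℚ) = ((d:ℚ)+1) * d ! := by
    rw [Nat.factorial_succ]; push_cast; ring
  have hA : (i ! : ℚ) ≠ 0 := by positivity
  have hB : (d ! : ℚ) ≠ 0 := by positivity
  have hC : ((i+d+1)! : ℚ) ≠ 0 := by positivity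
  have hE : ((2*i+d+2)! : ℚ) ≠ 0 := by positivity
  have h1 : ((i:ℚ)+1) ≠ 0 := by positivity
  have h2 : ((d:ℚ)+1) ≠ 0 := by positivity
  have h3 : ((d:ℚ)+2) ≠ 0 := by positivity
  rw [hc1, hc2, hc3, hc4, hc5, hc6, hc7, hc8, hf1, hf2, hf3, hf4, hf5, hf6, hf7]
  field_simp
  ring

lemma key_edge1 (m : ℕ) :
    ((m:ℤ)+2)^2 * bT (m+2) (m+1) - (11*(m:ℤ)^2+33*m+25) * bT (m+1) (m+1)
      - ((m:ℤ)+1)^2 * bT m (m+1) = bH m (m+1) - bH m m := by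
  unfold bT bH
  rw [Nat.choose_eq_zero_of_lt (by omega : m < m+1)]
  rw [Nat.choose_self]
  qify
  have hc1 : (Nat.choose (m+2) (m+1) : ℚ) = (m+2)! / ((m+1)! * 1 !) := by
    rw [Nat.cast_choose ℚ (by omega), show m+2-(m+1) = 1 by omega]
  have hc2 : (Nat.choose (m+2+(m+1)) (m+1) : ℚ) = (2*m+3)! / ((m+1)! * (m+2)!) := by
    rw [show m+2+(m+1) = 2*m+3 by omega, Nat.cast_choose ℚ (by omega),
      show 2*m+3-(m+1) = m+2 by omega]
  have hc3 : (Nat.choose (m+1+(m+1)) (m+1) : ℚ) = (2*m+2)! / ((m+1)! * (m+1)!) := by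
    rw [show m+1+(m+1) = 2*m+2 by omega, Nat.cast_choose ℚ (by omega),
      show 2*m+2-(m+1) = m+1 by omega]
  have hc4 : (Nat.choose (m+1) m : ℚ) = (m+1)! / (m ! * 1 !) := by
    rw [Nat.cast_choose ℚ (by omega), show m+1-m = 1 by omega]
  have hc5 : (Nat.choose (m+1+m) m : ℚ) = (2*m+1)! / (m ! * (m+1)!) := by
    rw [show m+1+m = 2*m+1 by omega, Nat.cast_choose ℚ (by omega),
      show 2*m+1-m = m+1 by omega]
  have hf1 : ((m+2)! : ℚ) = ((m:ℚ)+2) * (((m:ℚ)+1) * m !) := by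
    rw [show m+2 = (m+1)+1 by omega, Nat.factorial_succ, Nat.factorial_succ]; push_cast; ring
  have hf2 : ((m+1)! : ℚ) = ((m:ℚ)+1) * m ! := by rw [Nat.factorial_succ]; push_cast; ring
  have hf3 : ((2*m+3)! : ℚ) = (2*(m:ℚ)+3) * ((2*(m:ℚ)+2) * (2*m+1)!) := by
    rw [show 2*m+3 = (2*m+2)+1 by omega, Nat.factorial_succ,
      show 2*m+2 = (2*m+1)+1 by omega, Nat.factorial_succ]; push_cast; ring
  have hf4 : ((2*m+2)! : ℚ) = (2*(m:ℚ)+2) * (2*m+1)! := by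
    rw [show 2*m+2 = (2*m+1)+1 by omega, Nat.factorial_succ]; push_cast; ring
  have hA : (m ! : ℚ) ≠ 0 := by positivity
  have hE : ((2*m+1)! : ℚ) ≠ 0 := by positivity
  have h1 : ((m:ℚ)+1) ≠ 0 := by positivity
  rw [hc1, hc2, hc3, hc4, hc5, hf1, hf3, hf4, hf2, Nat.factorial_one]
  push_cast
  field_simp
  ring

-- case i = m+1 : j = m+2
lemma key_edge2 (m : ℕ) :
    ((m:ℤ)+2)^2 * bT (m+2) (m+2) - (11*(m:ℤ)^2+33*m+25) * bT (m+1) (m+2)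
      - ((m:ℤ)+1)^2 * bT m (m+2) = bH m (m+2) - bH m (m+1) := by
  unfold bT bH
  rw [Nat.choose_eq_zero_of_lt (by omega : m+1 < m+2),
    Nat.choose_eq_zero_of_lt (by omega : m < m+2), Nat.choose_self, Nat.choose_self]
  qify
  have hc2 : (Nat.choose (m+2+(m+2)) (m+2) : ℚ) = (2*m+4)! / ((m+2)! * (m+2)!) := by
    rw [show m+2+(m+2) = 2*m+4 by omega, Nat.cast_choose ℚ (by omega),
      show 2*m+4-(m+2) = m+2 by omega]
  have hc3 : (Nat.choose (m+1+(m+1)) (m+1) : ℚ) = (2*m+2)! / ((m+1)! * (m+1)!) := by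
    rw [show m+1+(m+1) = 2*m+2 by omega, Nat.cast_choose ℚ (by omega),
      show 2*m+2-(m+1) = m+1 by omega]
  have hf1 : ((m+2)! : ℚ) = ((m:ℚ)+2) * (m+1)! := by
    rw [show m+2 = (m+1)+1 by omega, Nat.factorial_succ]; push_cast; ring
  have hf3 : ((2*m+4)! : ℚ) = (2*(m:ℚ)+4) * ((2*(m:ℚ)+3) * (2*m+2)!) := by
    rw [show 2*m+4 = (2*m+3)+1 by omega, Nat.factorial_succ,
      show 2*m+3 = (2*m+2)+1 by omega, Nat.factorial_succ]; push_cast; ring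
  have hA : ((m+1)! : ℚ) ≠ 0 := by positivity
  have hE : ((2*m+2)! : ℚ) ≠ 0 := by positivity
  have h1 : ((m:ℚ)+2) ≠ 0 := by positivity
  rw [hc2, hc3, hf3, hf1]
  push_cast
  field_simp
  ring

lemma bkey (m i : ℕ) :
    ((m:ℤ)+2)^2 * bT (m+2) (i+1) - (11*(m:ℤ)^2+33*m+25) * bT (m+1) (i+1)
      - ((m:ℤ)+1)^2 * bT m (i+1) = bH m (i+1) - bH m i := by
  rcases lt_or_ge i m with h | h
  · -- i + 1 ≤ m : interior case
    obtain ⟨d, rfl⟩ : ∃ d, m = i + 1 + d := ⟨m - (i+1), by omega⟩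
    unfold bT bH
    qify
    rw [show i+1+d+2+(i+1) = 2*i+d+4 by omega, show i+1+d+1+(i+1) = 2*i+d+3 by omega,
      show i+1+d+(i+1) = 2*i+d+2 by omega, show i+1+d+1+i = 2*i+d+2 by omega,
      show i+1+d+2 = i+d+3 by omega, show i+1+d+1 = i+d+2 by omega,
      show i+1+d = i+d+1 by omega]
    push_cast
    linear_combination key_main i d
  · rcases eq_or_lt_of_le h with h2 | h2
    · subst h2; exact key_edge1 m
    · rcases eq_or_lt_of_le (show m + 1 ≤ i from h2) with h3 | h3
      · rw [← h3]; exact key_edge2 m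
      · -- i ≥ m + 2 : everything vanishes
        unfold bT bH
        rw [Nat.choose_eq_zero_of_lt (show m+2 < i+1 by omega),
          Nat.choose_eq_zero_of_lt (show m+1 < i+1 by omega),
          Nat.choose_eq_zero_of_lt (show m < i+1 by omega),
          Nat.choose_eq_zero_of_lt (show m+1 < i by omega)]
        push_cast
        ring

lemma btel (m M : ℕ) :
    ∑ j ∈ range (M+1), (((m:ℤ)+2)^2 * bT (m+2) j - (11*(m:ℤ)^2+33*m+25) * bT (m+1) j
      - ((m:ℤ)+1)^2 * bT m j) = bH m M := by
  induction M with
  | zero => simpa using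
      (by simp [bT, bH]; ring :
        ((m:ℤ)+2)^2 * bT (m+2) 0 - (11*(m:ℤ)^2+33*m+25) * bT (m+1) 0
          - ((m:ℤ)+1)^2 * bT m 0 = bH m 0)
  | succ M ih =>
    rw [Finset.sum_range_succ, ih, bkey m M]
    ring

lemma choose_mul_sum (n a : ℕ) (ha : a ≤ n) :
    ∑ j ∈ range (n+1), n.choose j * j.choose a = n.choose a * 2^(n-a) := by
  have h1 : ∑ j ∈ range (n+1), n.choose j * j.choose a
      = ∑ j ∈ Ico a (n+1), n.choose j * j.choose a := by
    refine (Finset.sum_subset ?_ ?_).symm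
    · intro x hx; simp only [Finset.mem_Ico] at hx; exact Finset.mem_range.mpr hx.2
    · intro x hx hx2
      have : x < a := by
        simp only [Finset.mem_Ico, Finset.mem_range] at hx hx2
        omega
      rw [Nat.choose_eq_zero_of_lt this, mul_zero]
  rw [h1, Finset.sum_Ico_eq_sum_range, show n+1-a = (n-a)+1 by omega]
  have h2 : ∀ j ∈ range (n-a+1), n.choose (a+j) * (a+j).choose a
      = n.choose a * (n-a).choose j := by
    intro j hj
    have hj' : j ≤ n - a := by simpa [Nat.lt_succ_iff] using hj
    rw [Nat.choose_mul (by omega : a ≤ a + j),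
      Nat.add_sub_cancel_left]
  rw [Finset.sum_congr rfl h2, ← Finset.mul_sum, Nat.sum_range_choose]

lemma delannoy (n : ℕ) :
    ∑ j ∈ range (n+1), n.choose j * (n+j).choose j
      = ∑ k ∈ range (n+1), (n.choose k)^2 * 2^(n-k) := by
  calc ∑ j ∈ range (n+1), n.choose j * (n+j).choose j
      = ∑ j ∈ range (n+1), ∑ a ∈ range (j+1), n.choose j * (n.choose a * j.choose a) := by
        refine Finset.sum_congr rfl fun j hj => ?_
        rw [Nat.add_choose_eq, Finset.Nat.sum_antidiagonal_eq_sum_range_succ_mk, Finset.mul_sum]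
        refine Finset.sum_congr rfl fun a ha => ?_
        rw [Nat.choose_symm (Nat.lt_succ_iff.mp (Finset.mem_range.mp ha))]
    _ = ∑ j ∈ range (n+1), ∑ a ∈ range (n+1), n.choose j * (n.choose a * j.choose a) := by
        refine Finset.sum_congr rfl fun j hj => ?_
        refine Finset.sum_subset (Finset.range_subset_range.mpr ?_) ?_
        · have := Finset.mem_range.mp hj; omega
        · intro a _ ha2
          have hja : j < a := by
            simp only [Finset.mem_range, Nat.lt_succ_iff, not_le] at ha2; exact ha2
          rw [Nat.choose_eq_zero_of_lt hja, mul_zero, mul_zero]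
    _ = ∑ a ∈ range (n+1), ∑ j ∈ range (n+1), n.choose j * (n.choose a * j.choose a) :=
        Finset.sum_comm
    _ = ∑ a ∈ range (n+1), n.choose a * ∑ j ∈ range (n+1), n.choose j * j.choose a := by
        refine Finset.sum_congr rfl fun a _ => ?_
        rw [Finset.mul_sum]
        exact Finset.sum_congr rfl fun j _ => by ring
    _ = ∑ k ∈ range (n+1), (n.choose k)^2 * 2^(n-k) := by
        refine Finset.sum_congr rfl fun a ha => ?_
        rw [choose_mul_sum n a (Nat.lt_succ_iff.mp (Finset.mem_range.mp ha))]
        ring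

lemma cast_beta (k : ℕ) : (apheryBeta k : ℤ) = ∑ j ∈ range (k+1), (bT k j : ℤ) := by
  unfold apheryBeta bT
  push_cast
  rfl

lemma brec (m : ℕ) :
    ((m:ℤ)+2)^2 * (apheryBeta (m+2) : ℤ)
      = (11*(m:ℤ)^2+33*m+25) * (apheryBeta (m+1) : ℤ) + ((m:ℤ)+1)^2 * (apheryBeta m : ℤ) := by
  have h := btel m (m+2)
  have hH : bH m (m+2) = 0 := by
    unfold bH
    rw [Nat.choose_eq_zero_of_lt (by omega : m+1 < m+2)]
    ring
  rw [hH, Finset.sum_sub_distrib, Finset.sum_sub_distrib, ← Finset.mul_sum, ← Finset.mul_sum,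
    ← Finset.mul_sum] at h
  have hs1 : ∑ j ∈ range (m+2+1), (bT (m+2) j : ℤ) = (apheryBeta (m+2) : ℤ) :=
    (cast_beta (m+2)).symm
  have hs2 : ∑ j ∈ range (m+2+1), (bT (m+1) j : ℤ) = (apheryBeta (m+1) : ℤ) := by
    rw [Finset.sum_range_succ, cast_beta (m+1)]
    have : bT (m+1) (m+2) = 0 := by
      unfold bT; rw [Nat.choose_eq_zero_of_lt (by omega : m+1 < m+2)]; ring
    rw [this]
    push_cast
    ring
  have hs3 : ∑ j ∈ range (m+2+1), (bT m j : ℤ) = (apheryBeta m : ℤ) := by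
    rw [Finset.sum_range_succ, Finset.sum_range_succ, cast_beta m]
    have h1 : bT m (m+2) = 0 := by
      unfold bT; rw [Nat.choose_eq_zero_of_lt (by omega : m < m+2)]; ring
    have h2 : bT m (m+1) = 0 := by
      unfold bT; rw [Nat.choose_eq_zero_of_lt (by omega : m < m+1)]; ring
    rw [h1, h2]
    push_cast
    ring
  rw [hs1, hs2, hs3] at h
  linarith

lemma main_id (n : ℕ) :
    ∑ k ∈ range (n+1), (11*(k:ℤ)^2+13*k+4) * (apheryBeta k : ℤ)
      = ((n:ℤ)+1)^2 * ((apheryBeta (n+1) : ℤ) + (apheryBeta n : ℤ)) := by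
  induction n with
  | zero =>
    rw [Finset.sum_range_one]
    norm_num [show apheryBeta 0 = 1 from rfl, show apheryBeta 1 = 3 from rfl]
  | succ n ih =>
    rw [Finset.sum_range_succ, ih, show n+1+1 = n+2 from rfl]
    push_cast
    linear_combination -brec n

lemma beta_odd (n : ℕ) : ¬ 2 ∣ apheryBeta n := by
  have hv : ((apheryBeta n : ℕ) : ZMod 2) = 1 := by
    have hsq : ∀ x : ZMod 2, x^2 = x := by decide
    have h1 : ((apheryBeta n : ℕ) : ZMod 2)
        = ((∑ j ∈ range (n+1), n.choose j * (n+j).choose j : ℕ) : ZMod 2) := by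
      unfold apheryBeta
      push_cast
      exact Finset.sum_congr rfl fun j _ => by rw [hsq]
    rw [h1, delannoy]
    push_cast
    rw [Finset.sum_range_succ]
    have hz : ∀ k ∈ range n, ((n.choose k : ZMod 2))^2 * (2 : ZMod 2)^(n-k) = 0 := by
      intro k hk
      have : (2 : ZMod 2) = 0 := by decide
      rw [this, zero_pow (by have := Finset.mem_range.mp hk; omega : n - k ≠ 0), mul_zero]
    rw [Finset.sum_eq_zero hz, Nat.choose_self, Nat.sub_self]
    norm_num
  intro h
  rw [(ZMod.natCast_eq_zero_iff _ _).mpr h] at hv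
  exact absurd hv (by decide)


theorem stmt0 (n : ℕ) (hn : 0 < n) :
    (2 * (n : ℤ) ^ 2) ∣
      ∑ k ∈ Finset.range n, (11 * (k : ℤ) ^ 2 + 13 * k + 4) * (apheryBeta k : ℤ) := by
  obtain ⟨m, rfl⟩ : ∃ m, n = m + 1 := ⟨n - 1, by omega⟩
  have hodd1 : Odd (apheryBeta (m+1)) := Nat.odd_iff.mpr (by
    have := beta_odd (m+1); omega)
  have hodd2 : Odd (apheryBeta m) := Nat.odd_iff.mpr (by
    have := beta_odd m; omega)
  obtain ⟨c, hc⟩ : ∃ c, apheryBeta (m+1) + apheryBeta m = 2*c := by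
    obtain ⟨r, hr⟩ := hodd1.add_odd hodd2
    exact ⟨r, by omega⟩
  have hm := main_id m
  refine ⟨(c : ℤ), ?_⟩
  rw [hm]
  have : ((apheryBeta (m+1) : ℤ) + (apheryBeta m : ℤ)) = 2 * c := by exact_mod_cast hc
  rw [this]
  push_cast
  ring
end

section
/- For every positive integer n, the sum over k from 0 to n-1 of (11k^2+9k+2)·(-1)^k·β_k is divisible by 2n^2, where β_k = Σ_{j=0}^{k} C(k,j)^2·C(k+j,j). -/
noncomputable def FF (n j : ℕ) : ℚ := (Nat.choose n j : ℚ)^2 * (Nat.choose (n+j) j : ℚ)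

noncomputable def cc (n j : ℚ) : ℚ := j^2 + j + 6*n*j - 11*n^2 - 15*n - 4

lemma key (j d : ℕ) :
    ((j:ℚ)+d+2)^2 * FF (j+d+2) (j+1)
      - (11*((j:ℚ)+d+1)^2 + 11*((j:ℚ)+d+1) + 3) * FF (j+d+1) (j+1)
      - ((j:ℚ)+d+1)^2 * FF (j+d) (j+1)
    = cc ((j:ℚ)+d+1) ((j:ℚ)+2) * FF (j+d+1) (j+1)
      - cc ((j:ℚ)+d+1) ((j:ℚ)+1) * FF (j+d+1) j := by
  have n1 : (j+d+2).choose (j+1) * (d+1) = (j+d+1).choose (j+1) * (j+d+2) := by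
    have h := Nat.choose_mul_succ_eq (j+d+1) (j+1)
    rw [show j+d+1+1 = j+d+2 by omega, show j+d+2-(j+1) = d+1 by omega] at h
    exact h.symm
  have n2 : ((j+d+2)+(j+1)).choose (j+1) * (j+d+2) = ((j+d+1)+(j+1)).choose (j+1) * ((j+d+2)+(j+1)) := by
    have h := Nat.choose_mul_succ_eq ((j+d+1)+(j+1)) (j+1)
    rw [show (j+d+1)+(j+1)+1 = (j+d+2)+(j+1) by omega, Nat.add_sub_cancel] at h
    exact h.symm
  have n3 : (j+d).choose (j+1) * (j+d+1) = (j+d+1).choose (j+1) * d := by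
    have h := Nat.choose_mul_succ_eq (j+d) (j+1)
    rw [show j+d+1-(j+1) = d by omega] at h
    exact h
  have n4 : ((j+d)+(j+1)).choose (j+1) * ((j+d+1)+(j+1)) = ((j+d+1)+(j+1)).choose (j+1) * (j+d+1) := by
    have h := Nat.choose_mul_succ_eq ((j+d)+(j+1)) (j+1)
    rw [show (j+d)+(j+1)+1 = (j+d+1)+(j+1) by omega, Nat.add_sub_cancel] at h
    exact h
  have n5 : (j+d+1).choose j * (d+1) = (j+d+1).choose (j+1) * (j+1) := by
    have h := Nat.choose_succ_right_eq (j+d+1) j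
    rw [show j+d+1-j = d+1 by omega] at h
    exact h.symm
  have n6 : ((j+d+1)+j).choose j * ((j+d+1)+(j+1)) = ((j+d+1)+(j+1)).choose (j+1) * (j+1) := by
    have h := Nat.add_one_mul_choose_eq ((j+d+1)+j) j
    rw [show (j+d+1)+j+1 = (j+d+1)+(j+1) by omega] at h
    rw [Nat.mul_comm]
    exact h
  have hd1 : ((d:ℚ)+1) ≠ 0 := by positivity
  have hjd1 : ((j:ℚ)+d+1) ≠ 0 := by positivity
  have hjd2 : ((j:ℚ)+d+2) ≠ 0 := by positivity
  have h2jd : ((j:ℚ)+d+1)+((j:ℚ)+1) ≠ 0 := by positivity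
  have e1 : ((j+d+2).choose (j+1) : ℚ)
      = ((j+d+1).choose (j+1) : ℚ) * ((j:ℚ)+d+2) / ((d:ℚ)+1) := by
    rw [eq_div_iff hd1]; exact_mod_cast n1
  have e2 : (((j+d+2)+(j+1)).choose (j+1) : ℚ)
      = (((j+d+1)+(j+1)).choose (j+1) : ℚ) * (((j:ℚ)+d+2)+((j:ℚ)+1)) / ((j:ℚ)+d+2) := by
    rw [eq_div_iff hjd2]; exact_mod_cast n2
  have e3 : ((j+d).choose (j+1) : ℚ)
      = ((j+d+1).choose (j+1) : ℚ) * (d:ℚ) / ((j:ℚ)+d+1) := by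
    rw [eq_div_iff hjd1]; exact_mod_cast n3
  have e4 : (((j+d)+(j+1)).choose (j+1) : ℚ)
      = (((j+d+1)+(j+1)).choose (j+1) : ℚ) * ((j:ℚ)+d+1) / (((j:ℚ)+d+1)+((j:ℚ)+1)) := by
    rw [eq_div_iff h2jd]; exact_mod_cast n4
  have e5 : ((j+d+1).choose j : ℚ)
      = ((j+d+1).choose (j+1) : ℚ) * ((j:ℚ)+1) / ((d:ℚ)+1) := by
    rw [eq_div_iff hd1]; exact_mod_cast n5
  have e6 : (((j+d+1)+j).choose j : ℚ)
      = (((j+d+1)+(j+1)).choose (j+1) : ℚ) * ((j:ℚ)+1) / (((j:ℚ)+d+1)+((j:ℚ)+1)) := by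
    rw [eq_div_iff h2jd]; exact_mod_cast n6
  simp only [FF, cc]
  rw [e1, e2, e3, e4, e5, e6]
  field_simp
  ring


noncomputable def HH (m jj : ℕ) : ℚ := cc ((m:ℚ)+1) ((jj:ℚ)+1) * FF (m+1) jj

lemma key_top (m : ℕ) :
    ((m:ℚ)+2)^2 * FF (m+2) (m+2) = - cc ((m:ℚ)+1) ((m:ℚ)+2) * FF (m+1) (m+1) := by
  have h := Nat.succ_mul_centralBinom_succ (m+1)
  simp only [Nat.centralBinom, Nat.succ_eq_add_one] at h
  rw [show 2*(m+1+1) = (m+2)+(m+2) by omega, show 2*(m+1) = (m+1)+(m+1) by omega,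
    show m+1+1 = m+2 by omega, show m+1+(m+1)+1 = 2*m+3 by omega] at h
  have h' : ((m:ℚ)+2) * (((m+2)+(m+2)).choose (m+2) : ℚ)
      = 2 * (2*(m:ℚ)+3) * (((m+1)+(m+1)).choose (m+1) : ℚ) := by
    exact_mod_cast h
  simp only [FF, cc, Nat.choose_self]
  push_cast
  linear_combination ((m:ℚ)+2) * h'

lemma step (m j : ℕ) (hj : j ≤ m+1) :
    ((m:ℚ)+2)^2 * FF (m+2) (j+1)
      - (11*((m:ℚ)+1)^2 + 11*((m:ℚ)+1) + 3) * FF (m+1) (j+1)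
      - ((m:ℚ)+1)^2 * FF m (j+1)
    = HH m (j+1) - HH m j := by
  rcases Nat.lt_or_ge j (m+1) with h | h
  · obtain ⟨d, rfl⟩ : ∃ d, m = j + d := ⟨m - j, by omega⟩
    have hk := key j d
    simp only [HH, cc] at hk ⊢
    push_cast at hk ⊢
    linear_combination hk
  · have hj' : j = m+1 := by omega
    subst hj'
    have hz1 : FF (m+1) (m+2) = 0 := by
      simp [FF, Nat.choose_eq_zero_of_lt (by omega : m+1 < m+2)]
    have hz2 : FF m (m+2) = 0 := by
      simp [FF, Nat.choose_eq_zero_of_lt (by omega : m < m+2)]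
    have h := key_top m
    simp only [HH, cc] at h ⊢
    rw [hz1, hz2] at *
    push_cast at h ⊢
    linear_combination h

lemma beta_sum (k N : ℕ) (h : k + 1 ≤ N) :
    (apheryBeta k : ℚ) = ∑ j ∈ Finset.range N, FF k j := by
  rw [apheryBeta]
  push_cast
  refine Finset.sum_subset (Finset.range_subset_range.2 h) ?_
  intro j _ hj
  have hkj : k < j := by simp only [Finset.mem_range, not_lt] at hj; omega
  simp [FF, Nat.choose_eq_zero_of_lt hkj]

lemma rec_q (m : ℕ) :
    ((m:ℚ)+2)^2 * (apheryBeta (m+2) : ℚ)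
      = (11*((m:ℚ)+1)^2 + 11*((m:ℚ)+1) + 3) * (apheryBeta (m+1) : ℚ)
        + ((m:ℚ)+1)^2 * (apheryBeta m : ℚ) := by
  rw [beta_sum (m+2) (m+3) (by omega), beta_sum (m+1) (m+3) (by omega),
    beta_sum m (m+3) (by omega)]
  have key0 : (∑ j ∈ Finset.range (m+3),
      (((m:ℚ)+2)^2 * FF (m+2) j
        - (11*((m:ℚ)+1)^2 + 11*((m:ℚ)+1) + 3) * FF (m+1) j
        - ((m:ℚ)+1)^2 * FF m j)) = 0 := by
    rw [Finset.sum_range_succ']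
    have tele : (∑ j ∈ Finset.range (m+2),
        (((m:ℚ)+2)^2 * FF (m+2) (j+1)
          - (11*((m:ℚ)+1)^2 + 11*((m:ℚ)+1) + 3) * FF (m+1) (j+1)
          - ((m:ℚ)+1)^2 * FF m (j+1))) = HH m (m+2) - HH m 0 := by
      rw [← Finset.sum_range_sub (HH m)]
      exact Finset.sum_congr rfl fun j hj =>
        step m j (by simp only [Finset.mem_range] at hj; omega)
    rw [tele]
    have hz : HH m (m+2) = 0 := by
      simp [HH, FF, Nat.choose_eq_zero_of_lt (by omega : m+1 < m+2)]
    have h0 : HH m 0 = cc ((m:ℚ)+1) 1 := by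
      simp [HH, FF]
    have hF0 : ∀ k : ℕ, FF k 0 = 1 := by intro k; simp [FF]
    rw [hz, h0, hF0, hF0, hF0]
    simp only [cc]
    ring
  simp only [Finset.sum_sub_distrib, ← Finset.mul_sum] at key0
  linarith [key0]


lemma rec_z (m : ℕ) :
    ((m:ℤ)+2)^2 * (apheryBeta (m+2) : ℤ)
      = (11*((m:ℤ)+1)^2 + 11*((m:ℤ)+1) + 3) * (apheryBeta (m+1) : ℤ)
        + ((m:ℤ)+1)^2 * (apheryBeta m : ℤ) := by
  exact_mod_cast rec_q m

lemma closed (n : ℕ) :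
    (∑ k ∈ Finset.range (n+1),
        (11 * (k : ℤ) ^ 2 + 9 * k + 2) * (-1) ^ k * (apheryBeta k : ℤ))
      = (-1)^n * ((n:ℤ)+1)^2 * ((apheryBeta (n+1) : ℤ) - (apheryBeta n : ℤ)) := by
  induction n with
  | zero =>
      norm_num [apheryBeta, Finset.sum_range_succ]
  | succ n ih =>
      rw [Finset.sum_range_succ, ih]
      have h := rec_z n
      push_cast
      rw [pow_succ]
      ring_nf
      ring_nf at h
      linear_combination ((-1:ℤ))^n * h
  
lemma central_even (i : ℕ) : 2 ∣ Nat.choose (2*(i+1)) (i+1) := by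
  rw [show 2*(i+1) = (2*i+1)+1 by omega]
  rw [Nat.choose_succ_succ]
  have : (2*i+1).choose (i+1) = (2*i+1).choose i := by
    rw [← Nat.choose_symm (by omega : i+1 ≤ 2*i+1)]
    congr 1
    omega
  simp only [Nat.succ_eq_add_one] at *
  omega

lemma beta_odd_s1 (k : ℕ) : apheryBeta k % 2 = 1 := by
  rw [apheryBeta, Finset.sum_range_succ']
  have h0 : Nat.choose k 0 ^ 2 * Nat.choose (k+0) 0 = 1 := by simp
  have heven : 2 ∣ ∑ i ∈ Finset.range k, Nat.choose k (i+1) ^ 2 * Nat.choose (k+(i+1)) (i+1) := by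
    apply Finset.dvd_sum
    intro i hi
    have hik : i + 1 ≤ k := by simp only [Finset.mem_range] at hi; omega
    have hmul : Nat.choose (k+(i+1)) (2*(i+1)) * Nat.choose (2*(i+1)) (i+1)
        = Nat.choose (k+(i+1)) (i+1) * Nat.choose k (i+1) := by
      have := Nat.choose_mul (n := k+(i+1)) (k := 2*(i+1)) (s := i+1)
        (by omega)
      rw [show k+(i+1)-(i+1) = k by omega, show 2*(i+1)-(i+1) = i+1 by omega] at this
      exact this
    have h2 : 2 ∣ Nat.choose (k+(i+1)) (i+1) * Nat.choose k (i+1) := by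
      rw [← hmul]
      exact Dvd.dvd.mul_left (central_even i) _
    calc (2:ℕ) ∣ Nat.choose k (i+1) * (Nat.choose (k+(i+1)) (i+1) * Nat.choose k (i+1)) :=
          Dvd.dvd.mul_left h2 _
      _ = Nat.choose k (i+1) ^ 2 * Nat.choose (k+(i+1)) (i+1) := by ring
  omega

theorem stmt1 (n : ℕ) (hn : 0 < n) :
    (2 * (n : ℤ) ^ 2) ∣
      ∑ k ∈ Finset.range n,
        (11 * (k : ℤ) ^ 2 + 9 * k + 2) * (-1) ^ k * (apheryBeta k : ℤ) := by
  obtain ⟨m, rfl⟩ : ∃ m, n = m + 1 := ⟨n - 1, by omega⟩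
  rw [closed m]
  have h1 := beta_odd_s1 (m+1)
  have h2 := beta_odd_s1 m
  obtain ⟨t, ht⟩ : ∃ t : ℤ, (apheryBeta (m+1) : ℤ) - (apheryBeta m : ℤ) = 2 * t := by
    have : (apheryBeta (m+1) : ℤ) % 2 = 1 := by omega
    have : (apheryBeta m : ℤ) % 2 = 1 := by omega
    exact ⟨((apheryBeta (m+1) : ℤ) - apheryBeta m)/2, by omega⟩
  rw [ht]
  refine ⟨(-1)^m * t, ?_⟩
  push_cast
  ring
end

section
/- For every positive integer n, Σ_{k=0}^{n-1} (11k^2+13k+4)·β_k = -Σ_{k=0}^{n-1} C(n,k+1)^2·C(n+k,k)·(n^3 - n^2 k - n k^2 - 2n^2 - 5nk + k^2 - 4n + 2k + 1), where β_k = Σ_{j=0}^{k} C(k,j)^2·C(k+j,j). -/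
namespace Stmt3Aux

noncomputable def T (n k : ℕ) : ℤ :=
  ((n.choose (k + 1) : ℤ)) ^ 2 * ((n + k).choose k : ℤ) *
    ((n : ℤ) ^ 3 - (n : ℤ) ^ 2 * k - (n : ℤ) * (k : ℤ) ^ 2 - 2 * (n : ℤ) ^ 2
      - 5 * (n : ℤ) * k + (k : ℤ) ^ 2 - 4 * n + 2 * k + 1)

noncomputable def G (n k : ℕ) : ℤ :=
  ((n.choose k : ℤ)) ^ 2 * ((n + k).choose k : ℤ) * k *
    (-(k : ℤ) ^ 2 + (3 * n - 2) * k + 2 * n)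

lemma r1 {n k : ℕ} (h : k ≤ n) :
    (n.choose (k + 1) : ℤ) * (k + 1) = (n.choose k : ℤ) * ((n : ℤ) - k) := by
  have h0 := Nat.choose_succ_right_eq n k
  zify [h] at h0
  linarith

lemma r2 (n k : ℕ) :
    ((n + 1).choose (k + 1) : ℤ) * (k + 1) = ((n : ℤ) + 1) * (n.choose k : ℤ) := by
  have h0 := Nat.add_one_mul_choose_eq n k
  zify at h0
  push_cast [Nat.succ_eq_add_one] at h0
  linarith

lemma r3 (n k : ℕ) :
    ((n + 1 + k).choose k : ℤ) * ((n : ℤ) + 1) = ((n : ℤ) + k + 1) * ((n + k).choose k : ℤ) := by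
  have hs1 : (n + k).choose n = (n + k).choose k := by
    have := Nat.choose_symm (Nat.le_add_right n k)
    rwa [Nat.add_sub_cancel_left, eq_comm] at this
  have hs2 : (n + k + 1).choose (n + 1) = (n + 1 + k).choose k := by
    have := Nat.choose_symm (show n + 1 ≤ n + k + 1 by omega)
    rw [show n + k + 1 - (n + 1) = k from by omega] at this
    rw [show n + 1 + k = n + k + 1 from by omega]
    exact this.symm
  have h0 := Nat.add_one_mul_choose_eq (n + k) n
  rw [hs1, hs2] at h0
  zify at h0
  push_cast at h0
  linarith

lemma r4 (n k : ℕ) :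
    ((n + k + 1).choose (k + 1) : ℤ) * (k + 1) = ((n : ℤ) + k + 1) * ((n + k).choose k : ℤ) := by
  have h0 := Nat.add_one_mul_choose_eq (n + k) k
  zify at h0
  -- push_cast not needed
  linarith

lemma cert {n k : ℕ} (h : k ≤ n) :
    (11 * (n : ℤ) ^ 2 + 13 * n + 4) * (n.choose k : ℤ) ^ 2 * ((n + k).choose k : ℤ)
      + T (n + 1) k - T n k = G n (k + 1) - G n k := by
  have h1 := r1 h
  have h2 := r2 n k
  have h3 := r3 n k
  have h4 := r4 n k
  have key : (((k : ℤ) + 1) ^ 3 * ((n : ℤ) + 1)) *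
      ((11 * (n : ℤ) ^ 2 + 13 * n + 4) * (n.choose k : ℤ) ^ 2 * ((n + k).choose k : ℤ)
        + T (n + 1) k - T n k)
      = (((k : ℤ) + 1) ^ 3 * ((n : ℤ) + 1)) * (G n (k + 1) - G n k) := by
    simp only [T, G]
    rw [show n + 1 + k = n + k + 1 from by omega, show n + (k + 1) = n + k + 1 from by omega]
    push_cast
    set nn : ℤ := (n : ℤ)
    set kk : ℤ := (k : ℤ)
    set A : ℤ := (n.choose k : ℤ)
    set B : ℤ := ((n + k).choose k : ℤ)
    set X : ℤ := (n.choose (k + 1) : ℤ)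
    set Y : ℤ := ((n + 1).choose (k + 1) : ℤ)
    set Z : ℤ := ((n + k + 1).choose k : ℤ)
    set W : ℤ := ((n + k + 1).choose (k + 1) : ℤ)
    have h3' : Z * (nn + 1) = (nn + kk + 1) * B := by
      have : ((n + 1 + k).choose k : ℤ) = Z := by
        rw [show n + 1 + k = n + k + 1 from by omega]
      rw [this] at h3; exact h3
    set P1 : ℤ := (nn+1) ^ 3 - (nn+1) ^ 2 * kk - (nn+1) * kk ^ 2 - 2 * (nn+1) ^ 2
      - 5 * (nn+1) * kk + kk ^ 2 - 4 * (nn+1) + 2 * kk + 1 with hP1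
    set P0 : ℤ := nn ^ 3 - nn ^ 2 * kk - nn * kk ^ 2 - 2 * nn ^ 2
      - 5 * nn * kk + kk ^ 2 - 4 * nn + 2 * kk + 1 with hP0
    set Q1 : ℤ := -(kk+1) ^ 2 + (3*nn-2) * (kk+1) + 2*nn with hQ1
    linear_combination
      ((kk+1) * P1 * (Y*(kk+1) + (nn+1)*A) * (nn+1) * Z) * h2
      + ((kk+1) * (nn+1)^2 * P1 * A^2) * h3'
      - (((kk+1) * (nn+1) * B * P0 + (nn+1) * (kk+1) * Q1 * W * (kk+1))
          * (X*(kk+1) + A*(nn-kk))) * h1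
      - ((nn+1) * (kk+1) * Q1 * A^2 * (nn-kk)^2) * h4
  have hne : (((k : ℤ) + 1) ^ 3 * ((n : ℤ) + 1)) ≠ 0 := by positivity
  exact mul_left_cancel₀ hne key

lemma Tnn (n : ℕ) : T n n = 0 := by
  simp [T, Nat.choose_succ_self]

lemma step (n : ℕ) :
    (11 * (n : ℤ) ^ 2 + 13 * n + 4) * (apheryBeta n : ℤ)
      = ∑ k ∈ Finset.range n, T n k - ∑ k ∈ Finset.range (n + 1), T (n + 1) k := by
  have hsum : ∑ k ∈ Finset.range (n + 1),
      ((11 * (n : ℤ) ^ 2 + 13 * n + 4) * (n.choose k : ℤ) ^ 2 * ((n + k).choose k : ℤ)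
        + T (n + 1) k - T n k)
      = ∑ k ∈ Finset.range (n + 1), (G n (k + 1) - G n k) := by
    apply Finset.sum_congr rfl
    intro k hk
    exact cert (Nat.lt_succ_iff.mp (Finset.mem_range.mp hk))
  rw [Finset.sum_range_sub (G n)] at hsum
  have hG0 : G n 0 = 0 := by simp [G]
  have hGn : G n (n + 1) = 0 := by simp [G, Nat.choose_succ_self]
  rw [hG0, hGn, sub_zero] at hsum
  rw [Finset.sum_sub_distrib, Finset.sum_add_distrib] at hsum
  have hT : ∑ k ∈ Finset.range (n + 1), T n k = ∑ k ∈ Finset.range n, T n k := by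
    rw [Finset.sum_range_succ, Tnn, add_zero]
  rw [hT] at hsum
  have hbeta : ((apheryBeta n : ℤ)) = ∑ k ∈ Finset.range (n + 1),
      (n.choose k : ℤ) ^ 2 * ((n + k).choose k : ℤ) := by
    simp [apheryBeta]
  rw [hbeta, Finset.mul_sum]
  have heq : ∑ k ∈ Finset.range (n + 1),
      (11 * (n : ℤ) ^ 2 + 13 * n + 4) * ((n.choose k : ℤ) ^ 2 * ((n + k).choose k : ℤ))
      = ∑ k ∈ Finset.range (n + 1),
      (11 * (n : ℤ) ^ 2 + 13 * n + 4) * (n.choose k : ℤ) ^ 2 * ((n + k).choose k : ℤ) := by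
    apply Finset.sum_congr rfl; intros; ring
  rw [heq]
  linarith

lemma main (n : ℕ) :
    ∑ k ∈ Finset.range n, (11 * (k : ℤ) ^ 2 + 13 * k + 4) * (apheryBeta k : ℤ)
      = -∑ k ∈ Finset.range n, T n k := by
  induction n with
  | zero => simp
  | succ m ih =>
      rw [Finset.sum_range_succ, ih, step m]
      ring

end Stmt3Aux

theorem stmt3 (n : ℕ) (hn : 0 < n) :
    ∑ k ∈ Finset.range n, (11 * (k : ℤ) ^ 2 + 13 * k + 4) * (apheryBeta k : ℤ) =
      -∑ k ∈ Finset.range n,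
        ((n.choose (k + 1) : ℤ)) ^ 2 * ((n + k).choose k : ℤ) *
          ((n : ℤ) ^ 3 - (n : ℤ) ^ 2 * k - (n : ℤ) * (k : ℤ) ^ 2 - 2 * (n : ℤ) ^ 2
            - 5 * (n : ℤ) * k + (k : ℤ) ^ 2 - 4 * n + 2 * k + 1) := by
  exact Stmt3Aux.main n
end

section
/- For every positive integer n, Σ_{k=0}^{n-1} (11k^2+9k+2)·(-1)^{n-1-k}·β_k = Σ_{k=0}^{n-1} C(n,k+1)^2·C(n+k,k)·n·(3n-k-1), where β_k = Σ_{j=0}^{k} C(k,j)^2·C(k+j,j). -/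
namespace ApheryAux

def FF (n k : ℕ) : ℕ := (n.choose k) ^ 2 * (n + k).choose k

lemma beta_eq (n : ℕ) : apheryBeta n = ∑ j ∈ Finset.range (n + 1), FF n j := rfl

lemma FF_zero (n : ℕ) : FF n 0 = 1 := by simp [FF]

lemma FF_eq_zero {n k : ℕ} (h : n < k) : FF n k = 0 := by
  simp [FF, Nat.choose_eq_zero_of_lt h]

def p (n k : ℕ) : ℤ :=
  ((k : ℤ) + 1) ^ 2 + (6 * n + 1) * (k + 1) - (11 * (n : ℤ) ^ 2 + 15 * n + 4)

def f (n : ℕ) : ℕ → ℤ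
  | 0 => 0
  | (j + 1) => (FF n j : ℤ) * p n j

lemma term_rec_generic (m j : ℕ) (hj : j < m + 1) :
    ((m : ℤ) + 2) ^ 2 * FF (m + 2) (j + 1)
      - (11 * ((m : ℤ) + 1) ^ 2 + 11 * ((m : ℤ) + 1) + 3) * FF (m + 1) (j + 1)
      - ((m : ℤ) + 1) ^ 2 * FF m (j + 1)
    = f (m + 1) (j + 1 + 1) - f (m + 1) (j + 1) := by
  have hjm : (j : ℤ) ≤ (m : ℤ) := by exact_mod_cast Nat.lt_succ_iff.mp hj
  -- six binomial relations, cast to ℤ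
  have h1 : ((m + 1).choose (j + 1) : ℤ) * ((m : ℤ) + 2)
      = ((m + 2).choose (j + 1) : ℤ) * ((m : ℤ) + 1 - j) := by
    have h := Nat.choose_mul_succ_eq (m + 1) (j + 1)
    have hc : m + 1 + 1 - (j + 1) = m + 1 - j := by omega
    rw [hc] at h
    have h' := congrArg (fun x : ℕ => (x : ℤ)) h
    push_cast [Nat.cast_sub (show j ≤ m + 1 by omega)] at h'
    linear_combination h'
  have h2 : ((m + j + 2).choose (j + 1) : ℤ) * ((m : ℤ) + j + 3)
      = ((m + j + 3).choose (j + 1) : ℤ) * ((m : ℤ) + 2) := by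
    have h := Nat.choose_mul_succ_eq (m + j + 2) (j + 1)
    have hc : m + j + 2 + 1 - (j + 1) = m + 2 := by omega
    rw [hc, show m + j + 2 + 1 = m + j + 3 from by omega] at h
    have h' := congrArg (fun x : ℕ => (x : ℤ)) h
    push_cast at h'
    linear_combination h'
  have h3 : ((m).choose (j + 1) : ℤ) * ((m : ℤ) + 1)
      = ((m + 1).choose (j + 1) : ℤ) * ((m : ℤ) - j) := by
    have h := Nat.choose_mul_succ_eq m (j + 1)
    have hc : m + 1 - (j + 1) = m - j := by omega
    rw [hc] at h
    have h' := congrArg (fun x : ℕ => (x : ℤ)) h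
    push_cast [Nat.cast_sub (show j ≤ m by omega)] at h'
    linear_combination h'
  have h4 : ((m + j + 1).choose (j + 1) : ℤ) * ((m : ℤ) + j + 2)
      = ((m + j + 2).choose (j + 1) : ℤ) * ((m : ℤ) + 1) := by
    have h := Nat.choose_mul_succ_eq (m + j + 1) (j + 1)
    have hc : m + j + 1 + 1 - (j + 1) = m + 1 := by omega
    rw [hc, show m + j + 1 + 1 = m + j + 2 from by omega] at h
    have h' := congrArg (fun x : ℕ => (x : ℤ)) h
    push_cast at h'
    linear_combination h'
  have h5 : ((m + 1).choose j : ℤ) * ((m : ℤ) + 1 - j)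
      = ((m + 1).choose (j + 1) : ℤ) * ((j : ℤ) + 1) := by
    have h := Nat.choose_succ_right_eq (m + 1) j
    have h' := congrArg (fun x : ℕ => (x : ℤ)) h
    push_cast [Nat.cast_sub (show j ≤ m + 1 by omega)] at h'
    linear_combination -h'
  have h6 : ((m + j + 1).choose j : ℤ) * ((m : ℤ) + j + 2)
      = ((m + j + 2).choose (j + 1) : ℤ) * ((j : ℤ) + 1) := by
    have h := Nat.add_one_mul_choose_eq (m + j + 1) j
    have h' := congrArg (fun x : ℕ => (x : ℤ)) h
    push_cast at h'
    linear_combination h'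
  have hM : (((m : ℤ) + 1) ^ 2 * ((m : ℤ) + 2) * ((m : ℤ) + j + 2) * ((m : ℤ) + 1 - j) ^ 2) ≠ 0 := by
    have c1 : ((m : ℤ) + 1) ≠ 0 := by positivity
    have c2 : ((m : ℤ) + 2) ≠ 0 := by positivity
    have c3 : ((m : ℤ) + j + 2) ≠ 0 := by positivity
    have c4 : ((m : ℤ) + 1 - j) ≠ 0 := by
      have : (0 : ℤ) < (m : ℤ) + 1 - j := by linarith
      exact ne_of_gt this
    exact mul_ne_zero (mul_ne_zero (mul_ne_zero (pow_ne_zero 2 c1) c2) c3) (pow_ne_zero 2 c4)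
  apply mul_left_cancel₀ hM
  simp only [FF, f, p]
  rw [show m + 2 + (j + 1) = m + j + 3 from by omega,
      show m + 1 + (j + 1) = m + j + 2 from by omega,
      show m + (j + 1) = m + j + 1 from by omega,
      show m + 1 + j = m + j + 1 from by omega]
  push_cast
  set a : ℤ := ((m + 1).choose (j + 1) : ℤ) with ha
  set a1 : ℤ := ((m + 2).choose (j + 1) : ℤ) with ha1
  set a2 : ℤ := ((m).choose (j + 1) : ℤ) with ha2
  set b : ℤ := ((m + j + 2).choose (j + 1) : ℤ) with hb
  set b1 : ℤ := ((m + j + 3).choose (j + 1) : ℤ) with hb1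
  set b2 : ℤ := ((m + j + 1).choose (j + 1) : ℤ) with hb2
  set c : ℤ := ((m + 1).choose j : ℤ) with hc
  set e : ℤ := ((m + j + 1).choose j : ℤ) with he
  linear_combination
      (((m:ℤ)+1)^2 * ((m:ℤ)+(j:ℤ)+2) * ((m:ℤ)+2)^2 * (-((a1*((m:ℤ)+1-(j:ℤ)) + a*((m:ℤ)+2)) * (b1*((m:ℤ)+2))))) * h1
    + (((m:ℤ)+1)^2 * ((m:ℤ)+(j:ℤ)+2) * ((m:ℤ)+2)^2 * (-(a*((m:ℤ)+2))^2)) * h2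
    + (-(((m:ℤ)+1)^2 * ((m:ℤ)+2) * ((m:ℤ)+1-(j:ℤ))^2) * ((((m:ℤ)+1)*a2 + a*((m:ℤ)-(j:ℤ))) * (((m:ℤ)+(j:ℤ)+2)*b2))) * h3
    + (-(((m:ℤ)+1)^2 * ((m:ℤ)+2) * ((m:ℤ)+1-(j:ℤ))^2) * (a*((m:ℤ)-(j:ℤ)))^2) * h4
    + (((m:ℤ)+1)^2 * ((m:ℤ)+2) * (((j:ℤ)+1)^2 + (6*((m:ℤ)+1)+1)*((j:ℤ)+1) - (11*((m:ℤ)+1)^2+15*((m:ℤ)+1)+4)) * ((c*((m:ℤ)+1-(j:ℤ)) + a*((j:ℤ)+1)) * (e*((m:ℤ)+(j:ℤ)+2)))) * h5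
    + (((m:ℤ)+1)^2 * ((m:ℤ)+2) * (((j:ℤ)+1)^2 + (6*((m:ℤ)+1)+1)*((j:ℤ)+1) - (11*((m:ℤ)+1)^2+15*((m:ℤ)+1)+4)) * (a*((j:ℤ)+1))^2) * h6

lemma term_rec_boundary (m : ℕ) :
    ((m : ℤ) + 2) ^ 2 * FF (m + 2) (m + 2)
      - (11 * ((m : ℤ) + 1) ^ 2 + 11 * ((m : ℤ) + 1) + 3) * FF (m + 1) (m + 2)
      - ((m : ℤ) + 1) ^ 2 * FF m (m + 2)
    = f (m + 1) (m + 2 + 1) - f (m + 1) (m + 2) := by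
  have hz1 : FF (m + 1) (m + 2) = 0 := FF_eq_zero (by omega)
  have hz2 : FF m (m + 2) = 0 := FF_eq_zero (by omega)
  have hFF1 : FF (m + 2) (m + 2) = (2 * m + 4).choose (m + 2) := by
    simp [FF, show m + 2 + (m + 2) = 2 * m + 4 from by omega]
  have hf2 : f (m + 1) (m + 2 + 1) = 0 := by
    show (FF (m + 1) (m + 2) : ℤ) * p (m + 1) (m + 2) = 0
    rw [hz1]; simp
  have hf1 : f (m + 1) (m + 2) = (2 * m + 2).choose (m + 1) * p (m + 1) (m + 1) := by
    show (FF (m + 1) (m + 1) : ℤ) * p (m + 1) (m + 1) = _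
    congr 1
    norm_cast
    simp [FF, show m + 1 + (m + 1) = 2 * m + 2 from by omega]
  rw [hz1, hz2, hFF1, hf2, hf1]
  -- key: (m+2)^2 C(2m+4, m+2) = (2m+4)(2m+3) C(2m+2, m+1)
  have e1 : (2 * m + 4) * (2 * m + 3).choose (m + 1)
      = (2 * m + 4).choose (m + 2) * (m + 2) := by
    have h := Nat.add_one_mul_choose_eq (2 * m + 3) (m + 1)
    simpa [show 2 * m + 3 + 1 = 2 * m + 4 from by omega] using h
  have e2 : (2 * m + 3) * (2 * m + 2).choose (m + 1)
      = (2 * m + 3).choose (m + 2) * (m + 2) := by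
    have h := Nat.add_one_mul_choose_eq (2 * m + 2) (m + 1)
    simpa [show 2 * m + 2 + 1 = 2 * m + 3 from by omega] using h
  have esym : (2 * m + 3).choose (m + 2) = (2 * m + 3).choose (m + 1) := by
    rw [← Nat.choose_symm (show m + 2 ≤ 2 * m + 3 from by omega)]
    congr 1
    omega
  rw [esym] at e2
  have e1' := congrArg (fun x : ℕ => (x : ℤ)) e1
  have e2' := congrArg (fun x : ℕ => (x : ℤ)) e2
  push_cast at e1' e2'
  simp only [p]
  push_cast
  linear_combination (-((m : ℤ) + 2)) * e1' + (-(2 * (m : ℤ) + 4)) * e2'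

lemma term_rec (m k : ℕ) (hk : k ≤ m + 2) :
    ((m : ℤ) + 2) ^ 2 * FF (m + 2) k
      - (11 * ((m : ℤ) + 1) ^ 2 + 11 * ((m : ℤ) + 1) + 3) * FF (m + 1) k
      - ((m : ℤ) + 1) ^ 2 * FF m k
    = f (m + 1) (k + 1) - f (m + 1) k := by
  cases k with
  | zero =>
    simp only [FF, f, p, Nat.choose_zero_right, Nat.add_zero, Nat.choose_self]
    push_cast
    ring
  | succ j =>
    rcases Nat.lt_or_ge j (m + 1) with hj | hj
    · exact term_rec_generic m j hj
    · have hje : j = m + 1 := by omega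
      subst hje
      exact term_rec_boundary m

lemma beta_rec (m : ℕ) :
    ((m : ℤ) + 2) ^ 2 * apheryBeta (m + 2)
      = (11 * ((m : ℤ) + 1) ^ 2 + 11 * ((m : ℤ) + 1) + 3) * apheryBeta (m + 1)
        + ((m : ℤ) + 1) ^ 2 * apheryBeta m := by
  have hsum :
      (∑ k ∈ Finset.range (m + 3),
        (((m : ℤ) + 2) ^ 2 * FF (m + 2) k
          - (11 * ((m : ℤ) + 1) ^ 2 + 11 * ((m : ℤ) + 1) + 3) * FF (m + 1) k
          - ((m : ℤ) + 1) ^ 2 * FF m k))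
      = f (m + 1) (m + 3) - f (m + 1) 0 := by
    rw [← Finset.sum_range_sub (f (m + 1)) (m + 3)]
    apply Finset.sum_congr rfl
    intro k hk
    have hk' : k < m + 3 := Finset.mem_range.mp hk
    exact term_rec m k (by omega)
  have hend : f (m + 1) (m + 3) = 0 := by
    show (FF (m + 1) (m + 2) : ℤ) * p (m + 1) (m + 2) = 0
    rw [FF_eq_zero (show m + 1 < m + 2 from by omega)]
    simp
  have hstart : f (m + 1) 0 = 0 := rfl
  rw [hend, hstart, sub_zero] at hsum
  have hb2 : (apheryBeta (m + 2) : ℤ) = ∑ k ∈ Finset.range (m + 3), (FF (m + 2) k : ℤ) := by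
    rw [beta_eq]
    rw [show m + 2 + 1 = m + 3 from rfl]
    push_cast
    rfl
  have hb1 : (apheryBeta (m + 1) : ℤ) = ∑ k ∈ Finset.range (m + 3), (FF (m + 1) k : ℤ) := by
    rw [beta_eq]
    rw [Finset.sum_range_succ (fun k => (FF (m + 1) k : ℤ)) (m + 2)]
    rw [FF_eq_zero (show m + 1 < m + 2 from by omega)]
    push_cast
    simp
  have hb0 : (apheryBeta m : ℤ) = ∑ k ∈ Finset.range (m + 3), (FF m k : ℤ) := by
    rw [beta_eq]
    rw [Finset.sum_range_succ (fun k => (FF m k : ℤ)) (m + 2),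
        Finset.sum_range_succ (fun k => (FF m k : ℤ)) (m + 1)]
    rw [FF_eq_zero (show m < m + 2 from by omega), FF_eq_zero (show m < m + 1 from by omega)]
    push_cast
    simp
  rw [Finset.sum_sub_distrib, Finset.sum_sub_distrib, ← Finset.mul_sum, ← Finset.mul_sum,
      ← Finset.mul_sum] at hsum
  rw [hb2, hb1, hb0]
  linarith [hsum]

lemma rhs_term (m k : ℕ) (hk : k ≤ m) :
    (((m + 1).choose (k + 1) : ℤ)) ^ 2 * ((m + 1 + k).choose k : ℤ) *
        ((m : ℤ) + 1) * (3 * ((m : ℤ) + 1) - k - 1)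
      = ((m : ℤ) + 1) ^ 2 * ((FF (m + 1) (k + 1) : ℤ) - (FF m (k + 1) : ℤ)) := by
  have hp : ((m + k + 2).choose (k + 1) : ℤ)
      = ((m + k + 1).choose k : ℤ) + ((m + k + 1).choose (k + 1) : ℤ) := by
    have h := Nat.choose_succ_succ' (m + k + 1) k
    have h' := congrArg (fun x : ℕ => (x : ℤ)) h
    push_cast at h'
    exact h'
  have hc : ((m + k + 1).choose (k + 1) : ℤ) * ((k : ℤ) + 1)
      = ((m + k + 1).choose k : ℤ) * ((m : ℤ) + 1) := by
    have h := Nat.choose_succ_right_eq (m + k + 1) k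
    have hcast : m + k + 1 - k = m + 1 := by omega
    rw [hcast] at h
    have h' := congrArg (fun x : ℕ => (x : ℤ)) h
    push_cast at h'
    exact h'
  have hd : ((m).choose (k + 1) : ℤ) * ((m : ℤ) + 1)
      = (((m + 1).choose (k + 1) : ℤ)) * ((m : ℤ) - k) := by
    have h := Nat.choose_mul_succ_eq m (k + 1)
    have hcast : m + 1 - (k + 1) = m - k := by omega
    rw [hcast] at h
    have h' := congrArg (fun x : ℕ => (x : ℤ)) h
    push_cast [Nat.cast_sub hk] at h'
    exact h'
  have hF1 : (FF (m + 1) (k + 1) : ℤ)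
      = (((m + 1).choose (k + 1) : ℤ)) ^ 2 * ((m + k + 2).choose (k + 1) : ℤ) := by
    simp only [FF, show m + 1 + (k + 1) = m + k + 2 from by omega]
    push_cast
    ring
  have hF2 : (FF m (k + 1) : ℤ)
      = (((m).choose (k + 1) : ℤ)) ^ 2 * ((m + k + 1).choose (k + 1) : ℤ) := by
    simp only [FF, show m + (k + 1) = m + k + 1 from by omega]
    push_cast
    ring
  have hG : ((m + 1 + k).choose k : ℤ) = ((m + k + 1).choose k : ℤ) := by
    rw [show m + 1 + k = m + k + 1 from by omega]
  have hK1 : ((k : ℤ) + 1) ≠ 0 := by positivity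
  apply mul_right_cancel₀ hK1
  rw [hF1, hF2, hG]
  linear_combination
    (-(((m:ℤ)+1) ^ 2 * (((m + 1).choose (k + 1) : ℤ)) ^ 2 * ((k:ℤ) + 1))) * hp
    + (((m:ℤ)+1) ^ 2 * (((m).choose (k + 1) : ℤ)) ^ 2
        - ((m:ℤ)+1) ^ 2 * (((m + 1).choose (k + 1) : ℤ)) ^ 2) * hc
    + (((m + k + 1).choose k : ℤ) * ((m:ℤ)+1) *
        (((m).choose (k + 1) : ℤ) * ((m:ℤ)+1)
          + ((m + 1).choose (k + 1) : ℤ) * ((m:ℤ) - k))) * hd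

lemma rhs_eq (m : ℕ) :
    (∑ k ∈ Finset.range (m + 1),
        (((m + 1).choose (k + 1) : ℤ)) ^ 2 * ((m + 1 + k).choose k : ℤ) *
          ((m : ℤ) + 1) * (3 * ((m : ℤ) + 1) - k - 1))
      = ((m : ℤ) + 1) ^ 2 * ((apheryBeta (m + 1) : ℤ) - apheryBeta m) := by
  have h1 : (∑ k ∈ Finset.range (m + 1),
        (((m + 1).choose (k + 1) : ℤ)) ^ 2 * ((m + 1 + k).choose k : ℤ) *
          ((m : ℤ) + 1) * (3 * ((m : ℤ) + 1) - k - 1))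
      = ∑ k ∈ Finset.range (m + 1),
          ((m : ℤ) + 1) ^ 2 * ((FF (m + 1) (k + 1) : ℤ) - (FF m (k + 1) : ℤ)) := by
    apply Finset.sum_congr rfl
    intro k hk
    exact rhs_term m k (Nat.lt_succ_iff.mp (Finset.mem_range.mp hk))
  rw [h1, ← Finset.mul_sum]
  congr 1
  rw [Finset.sum_sub_distrib]
  have hA : (apheryBeta (m + 1) : ℤ)
      = (∑ k ∈ Finset.range (m + 1), (FF (m + 1) (k + 1) : ℤ)) + 1 := by
    rw [beta_eq]
    push_cast
    rw [Finset.sum_range_succ' (fun j => (FF (m + 1) j : ℤ)) (m + 1), FF_zero]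
    push_cast
    ring
  have hB : (apheryBeta m : ℤ)
      = (∑ k ∈ Finset.range (m + 1), (FF m (k + 1) : ℤ)) + 1 := by
    rw [beta_eq]
    push_cast
    rw [Finset.sum_range_succ' (fun j => (FF m j : ℤ)) m, FF_zero]
    rw [Finset.sum_range_succ (fun k => (FF m (k + 1) : ℤ)) m]
    rw [FF_eq_zero (show m < m + 1 from by omega)]
    push_cast
    ring
  rw [hA, hB]
  ring

lemma lhs_eq (m : ℕ) :
    (∑ k ∈ Finset.range (m + 1),
        (11 * (k : ℤ) ^ 2 + 9 * k + 2) * (-1) ^ (m - k) * (apheryBeta k : ℤ))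
      = ((m : ℤ) + 1) ^ 2 * ((apheryBeta (m + 1) : ℤ) - apheryBeta m) := by
  induction m with
  | zero =>
    norm_num [apheryBeta, Finset.sum_range_succ]
  | succ m ih =>
    rw [Finset.sum_range_succ]
    have hstep : (∑ k ∈ Finset.range (m + 1),
        (11 * (k : ℤ) ^ 2 + 9 * k + 2) * (-1) ^ (m + 1 - k) * (apheryBeta k : ℤ))
        = -(∑ k ∈ Finset.range (m + 1),
            (11 * (k : ℤ) ^ 2 + 9 * k + 2) * (-1) ^ (m - k) * (apheryBeta k : ℤ)) := by
      rw [← Finset.sum_neg_distrib]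
      apply Finset.sum_congr rfl
      intro k hk
      have hk' : k ≤ m := Nat.lt_succ_iff.mp (Finset.mem_range.mp hk)
      rw [show m + 1 - k = (m - k) + 1 from by omega, pow_succ]
      ring
    rw [hstep, ih]
    rw [show m + 1 - (m + 1) = 0 from by omega]
    have hrec := beta_rec m
    push_cast
    rw [show m + 1 + 1 = m + 2 from rfl]
    linear_combination -hrec

end ApheryAux

theorem stmt4 (n : ℕ) (hn : 0 < n) :
    ∑ k ∈ Finset.range n,
        (11 * (k : ℤ) ^ 2 + 9 * k + 2) * (-1) ^ (n - 1 - k) * (apheryBeta k : ℤ) =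
      ∑ k ∈ Finset.range n,
        ((n.choose (k + 1) : ℤ)) ^ 2 * ((n + k).choose k : ℤ) *
          (n : ℤ) * (3 * (n : ℤ) - k - 1) := by
  obtain ⟨m, rfl⟩ : ∃ m, n = m + 1 := ⟨n - 1, by omega⟩
  have hL : (∑ k ∈ Finset.range (m + 1),
      (11 * (k : ℤ) ^ 2 + 9 * k + 2) * (-1) ^ (m + 1 - 1 - k) * (apheryBeta k : ℤ))
      = ∑ k ∈ Finset.range (m + 1),
        (11 * (k : ℤ) ^ 2 + 9 * k + 2) * (-1) ^ (m - k) * (apheryBeta k : ℤ) := by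
    apply Finset.sum_congr rfl
    intro k hk
    rw [show m + 1 - 1 - k = m - k from by omega]
  have hR : (∑ k ∈ Finset.range (m + 1),
        (((m + 1).choose (k + 1) : ℤ)) ^ 2 * (((m + 1 + k).choose k : ℤ)) *
          ((m + 1 : ℕ) : ℤ) * (3 * ((m + 1 : ℕ) : ℤ) - k - 1))
      = ∑ k ∈ Finset.range (m + 1),
        (((m + 1).choose (k + 1) : ℤ)) ^ 2 * ((m + 1 + k).choose k : ℤ) *
          ((m : ℤ) + 1) * (3 * ((m : ℤ) + 1) - k - 1) := by
    apply Finset.sum_congr rfl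
    intro k hk
    push_cast
    ring
  rw [hL, hR, ApheryAux.lhs_eq m, ApheryAux.rhs_eq m]
end

section
/- For every positive integer n, Σ_{k=0}^{n-1} (11k^3+7k^2-1)·(-1)^{n-1-k}·β_k = Σ_{k=0}^{n-1} C(n,k+1)^2·C(n+k,k)·(4n^3 - 2n^2 k - n k^2 - 4n^2 - 3nk + k^2 - 2n + 2k + 1), where β_k = Σ_{j=0}^{k} C(k,j)^2·C(k+j,j). -/
namespace Stmt5Aux

noncomputable def f1 (n k : ℕ) : ℚ :=
  (((n+1).choose k : ℚ))^2 * (((n+1+k).choose k : ℚ)) * ((k:ℚ) - ((n:ℚ)+1)) *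
    ((k:ℚ)^3 + (k:ℚ)^2 - 2*((n:ℚ)+1)^2*(k:ℚ) + ((n:ℚ)+1)^3 - ((n:ℚ)+1)^2) / ((n:ℚ)+1+(k:ℚ))

def f2 (n : ℕ) : ℕ → ℚ
  | 0 => 0
  | (k+1) => (((n+1).choose k : ℚ))^2 * (((n+k+1).choose k : ℚ)) *
      (((k:ℚ)+1)^2 + 6*(n:ℚ)*((k:ℚ)+1) + 7*((k:ℚ)+1) - 11*(n:ℚ)^2 - 37*(n:ℚ) - 30)

lemma chooseQ1 (n k : ℕ) (h : k ≤ n) :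
    (n.choose (k+1) : ℚ) * ((k:ℚ)+1) = (n.choose k : ℚ) * ((n:ℚ) - (k:ℚ)) := by
  have h2 : ((n - k : ℕ) : ℚ) = (n:ℚ) - (k:ℚ) := Nat.cast_sub h
  rw [← h2]; exact_mod_cast Nat.choose_succ_right_eq n k

lemma chooseQ2 (n k : ℕ) :
    ((n+1).choose (k+1) : ℚ) * ((k:ℚ)+1) = ((n:ℚ)+1) * (n.choose k : ℚ) := by
  exact_mod_cast (Nat.add_one_mul_choose_eq n k).symm

lemma chooseQ3 (n k : ℕ) (h : k ≤ n+1) :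
    (n.choose k : ℚ) * ((n:ℚ)+1) = ((n+1).choose k : ℚ) * ((n:ℚ)+1-(k:ℚ)) := by
  have h2 : ((n + 1 - k : ℕ) : ℚ) = (n:ℚ)+1-(k:ℚ) := by
    rw [Nat.cast_sub h]; push_cast; ring
  rw [← h2]; exact_mod_cast Nat.choose_mul_succ_eq n k

lemma betaQ (N : ℕ) :
    (apheryBeta N : ℚ) = ∑ j ∈ Finset.range (N+1), ((N.choose j:ℚ))^2 * (((N+j).choose j : ℚ)) := by
  unfold apheryBeta; push_cast; rfl

lemma f1_top (n : ℕ) : f1 n (n+1) = 0 := by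
  unfold f1; push_cast; ring

lemma f1_zero (n : ℕ) : f1 n 0 = -(((n:ℚ)+1)^2*(n:ℚ)) := by
  unfold f1
  simp
  have hn1 : ((n:ℚ)+1) ≠ 0 := by positivity
  field_simp
  ring

lemma perk1 (n k : ℕ) (h : k ≤ n) :
    (((n+1).choose (k+1) : ℚ))^2 * (((n+1+k).choose k : ℚ)) *
      (4*((n:ℚ)+1)^3 - 2*((n:ℚ)+1)^2*(k:ℚ) - ((n:ℚ)+1)*(k:ℚ)^2 - 4*((n:ℚ)+1)^2
        - 3*((n:ℚ)+1)*(k:ℚ) + (k:ℚ)^2 - 2*((n:ℚ)+1) + 2*(k:ℚ) + 1)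
    = ((n:ℚ)+1)^2*(n:ℚ) * (((n+1).choose (k+1) : ℚ))^2 * (((n+k+2).choose (k+1) : ℚ))
      - ((n:ℚ)+1)^3 * ((n.choose k : ℚ))^2 * (((n+k).choose k : ℚ))
      + (f1 n (k+1) - f1 n k) := by
  have hk : ((k:ℚ)+1) ≠ 0 := by positivity
  have hn1 : ((n:ℚ)+1) ≠ 0 := by positivity
  have hnk1 : ((n:ℚ)+1+(k:ℚ)) ≠ 0 := by positivity
  have hnk2 : ((n:ℚ)+1+((k:ℚ)+1)) ≠ 0 := by positivity
  have E1 : (((n+1).choose (k+1) : ℚ)) = ((n+1).choose k : ℚ) * ((n:ℚ)+1-(k:ℚ)) / ((k:ℚ)+1) := by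
    rw [eq_div_iff hk]
    have := chooseQ1 (n+1) k (by omega)
    push_cast at this ⊢
    linear_combination this
  have E2 : (((n+k+2).choose (k+1) : ℚ)) = ((n+1+k).choose k : ℚ) * ((n:ℚ)+(k:ℚ)+2) / ((k:ℚ)+1) := by
    rw [eq_div_iff hk]
    have := chooseQ2 (n+1+k) k
    rw [show n+1+k+1 = n+k+2 from by omega] at this
    push_cast at this ⊢
    linear_combination this
  have E3 : ((n.choose k : ℚ)) = ((n+1).choose k : ℚ) * ((n:ℚ)+1-(k:ℚ)) / ((n:ℚ)+1) := by
    rw [eq_div_iff hn1]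
    have := chooseQ3 n k (by omega)
    push_cast at this ⊢
    linear_combination this
  have E4 : (((n+k).choose k : ℚ)) = ((n+1+k).choose k : ℚ) * ((n:ℚ)+1) / ((n:ℚ)+1+(k:ℚ)) := by
    rw [eq_div_iff hnk1]
    have := chooseQ3 (n+k) k (by omega)
    rw [show n+k+1 = n+1+k from by omega] at this
    push_cast at this ⊢
    linear_combination this
  unfold f1
  rw [show n+1+(k+1) = n+k+2 from by omega]
  push_cast
  rw [E1, E2, E3, E4]
  field_simp
  ring

lemma id1 (n : ℕ) :
    ∑ k ∈ Finset.range (n+1), (((n+1).choose (k+1) : ℚ))^2 * (((n+1+k).choose k : ℚ)) *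
      (4*((n:ℚ)+1)^3 - 2*((n:ℚ)+1)^2*(k:ℚ) - ((n:ℚ)+1)*(k:ℚ)^2 - 4*((n:ℚ)+1)^2
        - 3*((n:ℚ)+1)*(k:ℚ) + (k:ℚ)^2 - 2*((n:ℚ)+1) + 2*(k:ℚ) + 1)
    = ((n:ℚ)+1)^2*(n:ℚ)*(apheryBeta (n+1) : ℚ) - ((n:ℚ)+1)^3*(apheryBeta n : ℚ) := by
  have key : ∀ k ∈ Finset.range (n+1),
      (((n+1).choose (k+1) : ℚ))^2 * (((n+1+k).choose k : ℚ)) *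
        (4*((n:ℚ)+1)^3 - 2*((n:ℚ)+1)^2*(k:ℚ) - ((n:ℚ)+1)*(k:ℚ)^2 - 4*((n:ℚ)+1)^2
          - 3*((n:ℚ)+1)*(k:ℚ) + (k:ℚ)^2 - 2*((n:ℚ)+1) + 2*(k:ℚ) + 1)
      = (((n:ℚ)+1)^2*(n:ℚ) * ((((n+1).choose (k+1) : ℚ))^2 * (((n+1+(k+1)).choose (k+1) : ℚ)))
        - ((n:ℚ)+1)^3 * (((n.choose k : ℚ))^2 * (((n+k).choose k : ℚ))))
        + (f1 n (k+1) - f1 n k) := by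
    intro k hk
    rw [Finset.mem_range] at hk
    have := perk1 n k (by omega)
    rw [show n+1+(k+1) = n+k+2 from by omega]
    linear_combination this
  rw [Finset.sum_congr rfl key, Finset.sum_add_distrib, Finset.sum_range_sub (f1 n),
    Finset.sum_sub_distrib, ← Finset.mul_sum, ← Finset.mul_sum, f1_top, f1_zero]
  have hb1 : ∑ k ∈ Finset.range (n+1), (((n+1).choose (k+1) : ℚ))^2 * (((n+1+(k+1)).choose (k+1) : ℚ))
      = (apheryBeta (n+1) : ℚ) - 1 := by
    rw [betaQ (n+1), Finset.sum_range_succ' (fun j => (((n+1).choose j : ℚ))^2 * (((n+1+j).choose j : ℚ))) (n+1)]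
    simp
  rw [hb1, ← betaQ n]
  ring

lemma perk2 (n k : ℕ) (hk : k < n+3) :
    ((n:ℚ)+2)^2 * (((n+2).choose k : ℚ))^2 * (((n+2+k).choose k : ℚ))
      - (11*((n:ℚ)+1)^2 + 11*((n:ℚ)+1) + 3) * (((n+1).choose k : ℚ))^2 * (((n+1+k).choose k : ℚ))
      - ((n:ℚ)+1)^2 * ((n.choose k : ℚ))^2 * (((n+k).choose k : ℚ))
    = f2 n (k+1) - f2 n k := by
  rcases k with _ | i
  · simp [f2]; ring
  by_cases h : i ≤ n
  · have hi : ((i:ℚ)+1) ≠ 0 := by positivity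
    have hn1 : ((n:ℚ)+1) ≠ 0 := by positivity
    have hn2 : ((n:ℚ)+2) ≠ 0 := by positivity
    have hni : ((n:ℚ)+1-(i:ℚ)) ≠ 0 := by
      have : (i:ℚ) ≤ (n:ℚ) := by exact_mod_cast h
      intro hc; nlinarith
    have E1 : ((n.choose (i+1)):ℚ) = (n.choose i : ℚ) * ((n:ℚ)-(i:ℚ)) / ((i:ℚ)+1) := by
      rw [eq_div_iff hi]; exact chooseQ1 n i h
    have E2 : (((n+1).choose (i+1)):ℚ) = (n.choose i : ℚ) * ((n:ℚ)+1) / ((i:ℚ)+1) := by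
      rw [eq_div_iff hi]; rw [chooseQ2 n i]; ring
    have E3 : (((n+1).choose i):ℚ) = (n.choose i : ℚ) * ((n:ℚ)+1) / ((n:ℚ)+1-(i:ℚ)) := by
      rw [eq_div_iff hni]; linear_combination -chooseQ3 n i (by omega)
    have E4 : (((n+2).choose (i+1)):ℚ) = ((n+1).choose i : ℚ) * ((n:ℚ)+2) / ((i:ℚ)+1) := by
      rw [eq_div_iff hi]
      have := chooseQ2 (n+1) i
      push_cast at this; linear_combination this
    have E5 : (((n+i+1).choose (i+1)):ℚ) = ((n+i).choose i : ℚ) * ((n:ℚ)+(i:ℚ)+1) / ((i:ℚ)+1) := by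
      rw [eq_div_iff hi]
      have := chooseQ2 (n+i) i
      push_cast at this; linear_combination this
    have E6 : (((n+i+1).choose i):ℚ) = ((n+i).choose i : ℚ) * ((n:ℚ)+(i:ℚ)+1) / ((n:ℚ)+1) := by
      rw [eq_div_iff hn1]
      have := chooseQ3 (n+i) i (by omega)
      push_cast at this; linear_combination -this
    have E7 : (((n+i+2).choose (i+1)):ℚ) = ((n+i+1).choose i : ℚ) * ((n:ℚ)+(i:ℚ)+2) / ((i:ℚ)+1) := by
      rw [eq_div_iff hi]
      have := chooseQ2 (n+i+1) i
      push_cast at this; linear_combination this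
    have E8 : (((n+i+2).choose i):ℚ) = ((n+i+1).choose i : ℚ) * ((n:ℚ)+(i:ℚ)+2) / ((n:ℚ)+2) := by
      rw [eq_div_iff hn2]
      have := chooseQ3 (n+i+1) i (by omega)
      push_cast at this; linear_combination -this
    have E9 : (((n+i+3).choose (i+1)):ℚ) = ((n+i+2).choose i : ℚ) * ((n:ℚ)+(i:ℚ)+3) / ((i:ℚ)+1) := by
      rw [eq_div_iff hi]
      have := chooseQ2 (n+i+2) i
      push_cast at this; linear_combination this
    show _ = f2 n (i+2) - f2 n (i+1)
    rw [show n+2+(i+1) = n+i+3 from by omega, show n+1+(i+1) = n+i+2 from by omega,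
      show n+(i+1) = n+i+1 from by omega]
    simp only [f2]
    rw [show n+(i+1)+1 = n+i+2 from by omega]
    push_cast
    rw [E9, E8, E7, E6, E5, E4, E3, E2, E1]
    field_simp
    ring
  · have hi : i = n+1 := by omega
    subst hi
    have z1 : (n+2).choose (n+2) = 1 := Nat.choose_self _
    have z2 : (n+1).choose (n+2) = 0 := Nat.choose_eq_zero_of_lt (by omega)
    have z3 : n.choose (n+2) = 0 := Nat.choose_eq_zero_of_lt (by omega)
    have hA : (2*n+4).choose (n+2) = 2 * ((2*n+3).choose (n+2)) := by
      have p := Nat.choose_succ_succ (2*n+3) (n+1)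
      simp only [Nat.succ_eq_add_one] at p
      rw [show (2*n+3)+1 = 2*n+4 from by omega, show (n+1)+1 = n+2 from by omega] at p
      have s : (2*n+3).choose (n+1) = (2*n+3).choose (n+2) := by
        have hsym := Nat.choose_symm (n := 2*n+3) (k := n+2) (by omega)
        rw [show 2*n+3-(n+2) = n+1 from by omega] at hsym
        exact hsym
      omega
    have hB : ((2*n+3) : ℚ) * ((2*n+2).choose (n+1) : ℚ) = ((2*n+3).choose (n+2) : ℚ) * ((n:ℚ)+2) := by
      have h2 := chooseQ2 (2*n+2) (n+1)
      rw [show (2*n+2)+1 = 2*n+3 from by omega, show (n+1)+1 = n+2 from by omega] at h2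
      push_cast at h2
      linear_combination -h2
    have hAq : ((2*n+4).choose (n+2) : ℚ) = 2 * ((2*n+3).choose (n+2) : ℚ) := by exact_mod_cast hA
    show _ = f2 n (n+3) - f2 n (n+2)
    simp only [f2]
    rw [show n+2+(n+2) = 2*n+4 from by omega, show n+(n+2)+1 = 2*n+3 from by omega,
      show n+(n+1)+1 = 2*n+2 from by omega, z1, z3, hAq]
    rw [show ((n:ℕ)+1+1) = n+2 from rfl, z2, Nat.choose_self]
    push_cast
    linear_combination (-2*((n:ℚ)+2)) * hB

lemma rec2 (n : ℕ) :
    ((n:ℚ)+2)^2*(apheryBeta (n+2):ℚ)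
      = (11*((n:ℚ)+1)^2+11*((n:ℚ)+1)+3)*(apheryBeta (n+1):ℚ) + ((n:ℚ)+1)^2*(apheryBeta n:ℚ) := by
  have tele : ∑ k ∈ Finset.range (n+3), (f2 n (k+1) - f2 n k) = f2 n (n+3) - f2 n 0 :=
    Finset.sum_range_sub (f2 n) (n+3)
  have top : f2 n (n+3) = 0 := by
    show f2 n ((n+2)+1) = 0
    simp only [f2]
    rw [show (n:ℕ)+1 = n+1 from rfl]
    have : (n+1).choose (n+2) = 0 := Nat.choose_eq_zero_of_lt (by omega)
    rw [this]
    push_cast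
    ring
  have hsum : ∑ k ∈ Finset.range (n+3),
      (((n:ℚ)+2)^2 * (((n+2).choose k : ℚ))^2 * (((n+2+k).choose k : ℚ))
      - (11*((n:ℚ)+1)^2 + 11*((n:ℚ)+1) + 3) * (((n+1).choose k : ℚ))^2 * (((n+1+k).choose k : ℚ))
      - ((n:ℚ)+1)^2 * ((n.choose k : ℚ))^2 * (((n+k).choose k : ℚ))) = 0 := by
    rw [Finset.sum_congr rfl (fun k hk => perk2 n k (Finset.mem_range.mp hk)), tele, top]
    simp [f2]
  have b2 : ∑ k ∈ Finset.range (n+3), (((n+2).choose k : ℚ))^2 * (((n+2+k).choose k : ℚ))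
      = (apheryBeta (n+2) : ℚ) := (betaQ (n+2)).symm
  have b1 : ∑ k ∈ Finset.range (n+3), (((n+1).choose k : ℚ))^2 * (((n+1+k).choose k : ℚ))
      = (apheryBeta (n+1) : ℚ) := by
    rw [Finset.sum_range_succ, betaQ (n+1)]
    have : (n+1).choose (n+2) = 0 := Nat.choose_eq_zero_of_lt (by omega)
    rw [this]
    push_cast
    ring
  have b0 : ∑ k ∈ Finset.range (n+3), ((n.choose k : ℚ))^2 * (((n+k).choose k : ℚ))
      = (apheryBeta n : ℚ) := by
    rw [Finset.sum_range_succ, Finset.sum_range_succ, betaQ n]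
    have h1 : n.choose (n+2) = 0 := Nat.choose_eq_zero_of_lt (by omega)
    have h2 : n.choose (n+1) = 0 := Nat.choose_eq_zero_of_lt (by omega)
    rw [h1, h2]
    push_cast
    ring
  have expand : ((n:ℚ)+2)^2*(apheryBeta (n+2):ℚ)
      - (11*((n:ℚ)+1)^2+11*((n:ℚ)+1)+3)*(apheryBeta (n+1):ℚ)
      - ((n:ℚ)+1)^2*(apheryBeta n:ℚ) = 0 := by
    rw [← b2, ← b1, ← b0, Finset.mul_sum, Finset.mul_sum, Finset.mul_sum,
      ← Finset.sum_sub_distrib, ← Finset.sum_sub_distrib, ← hsum]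
    exact Finset.sum_congr rfl fun k _ => by ring
  linear_combination expand

lemma mainL (m : ℕ) :
    ∑ k ∈ Finset.range (m+1),
        (11*(k:ℚ)^3 + 7*(k:ℚ)^2 - 1) * (-1:ℚ)^(m+1-1-k) * (apheryBeta k : ℚ)
      = ((m:ℚ)+1)^2*(m:ℚ)*(apheryBeta (m+1) : ℚ) - ((m:ℚ)+1)^3*(apheryBeta m : ℚ) := by
  induction m with
  | zero =>
    simp [apheryBeta]
  | succ m ih =>
    rw [Finset.sum_range_succ]
    rw [show m+1+1-1-(m+1) = 0 from by omega]
    have hcongr : ∀ k ∈ Finset.range (m+1),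
        (11*(k:ℚ)^3 + 7*(k:ℚ)^2 - 1) * (-1:ℚ)^(m+1+1-1-k) * (apheryBeta k : ℚ)
        = -((11*(k:ℚ)^3 + 7*(k:ℚ)^2 - 1) * (-1:ℚ)^(m+1-1-k) * (apheryBeta k : ℚ)) := by
      intro k hk
      rw [Finset.mem_range] at hk
      rw [show m+1+1-1-k = (m+1-1-k)+1 from by omega, pow_succ]
      ring
    rw [Finset.sum_congr rfl hcongr, Finset.sum_neg_distrib, ih]
    have h2 := rec2 m
    push_cast
    linear_combination (-((m:ℚ)+1)) * h2

end Stmt5Aux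

theorem stmt5 (n : ℕ) (hn : 0 < n) :
    ∑ k ∈ Finset.range n,
        (11 * (k : ℤ) ^ 3 + 7 * (k : ℤ) ^ 2 - 1) * (-1) ^ (n - 1 - k) * (apheryBeta k : ℤ) =
      ∑ k ∈ Finset.range n,
        ((n.choose (k + 1) : ℤ)) ^ 2 * ((n + k).choose k : ℤ) *
          (4 * (n : ℤ) ^ 3 - 2 * (n : ℤ) ^ 2 * k - (n : ℤ) * (k : ℤ) ^ 2 - 4 * (n : ℤ) ^ 2
            - 3 * (n : ℤ) * k + (k : ℤ) ^ 2 - 2 * n + 2 * k + 1) := by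
  obtain ⟨m, rfl⟩ : ∃ m, n = m+1 := ⟨n-1, by omega⟩
  have h1 := Stmt5Aux.mainL m
  have h2 := Stmt5Aux.id1 m
  have h3 := h1.trans h2.symm
  exact_mod_cast h3
end

section
/- For every positive even integer n, Σ_{k=0}^{n-1} C(n-1,k)·C(n+k,2k)·C(2k,k+1) ≡ 1 (mod 2). -/
open Nat Finset

private lemma odd_choose_iff {n k : ℕ} :
    n.choose k % 2 = 1 ↔ ∀ i, k.testBit i = true → n.testBit i = true := by
  classical
  set a := max n k + 1 with ha
  have hn2 : n < 2 ^ a := lt_of_lt_of_le ((Nat.lt_two_pow_self (n := n)))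
    (Nat.pow_le_pow_right (by norm_num) (by omega))
  have hk2 : k < 2 ^ a := lt_of_lt_of_le ((Nat.lt_two_pow_self (n := k)))
    (Nat.pow_le_pow_right (by norm_num) (by omega))
  have key := Choose.lucas_theorem_nat (p := 2) hn2 hk2
  rw [Nat.ModEq] at key
  rw [key]
  constructor
  · intro h i hki
    by_contra hni
    have hia : i < a := by
      by_contra h'
      have : k.testBit i = false := Nat.testBit_lt_two_pow
        (lt_of_lt_of_le hk2 (Nat.pow_le_pow_right (by norm_num) (by omega)))
      simp [this] at hki
    have hn0 : n / 2 ^ i % 2 = 0 := by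
      rw [Nat.testBit_eq_decide_div_mod_eq (x := n)] at hni
      simp at hni
      omega
    have hk1 : k / 2 ^ i % 2 = 1 := by
      rw [Nat.testBit_eq_decide_div_mod_eq (x := k)] at hki
      simpa using hki
    have hfac : Nat.choose (n / 2 ^ i % 2) (k / 2 ^ i % 2) = 0 := by
      rw [hn0, hk1]; rfl
    have hz : (∏ i ∈ range a, Nat.choose (n / 2 ^ i % 2) (k / 2 ^ i % 2)) = 0 :=
      Finset.prod_eq_zero (Finset.mem_range.mpr hia) hfac
    rw [hz] at h
    simp at h
  · intro h
    have hnd : ¬ 2 ∣ ∏ i ∈ range a, Nat.choose (n / 2 ^ i % 2) (k / 2 ^ i % 2) := by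
      intro hd
      obtain ⟨i, hi, hdi⟩ := (Nat.prime_two.prime.dvd_finset_prod_iff _).mp hd
      rcases Nat.mod_two_eq_zero_or_one (n / 2 ^ i) with hn0 | hn1 <;>
        rcases Nat.mod_two_eq_zero_or_one (k / 2 ^ i) with hk0 | hk1
      · rw [hn0, hk0] at hdi; norm_num at hdi
      · have hkb : k.testBit i = true := by rw [Nat.testBit_eq_decide_div_mod_eq]; simp [hk1]
        have hb := h i hkb
        rw [Nat.testBit_eq_decide_div_mod_eq] at hb; simp [hn0] at hb
      · rw [hn1, hk0] at hdi; norm_num at hdi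
      · rw [hn1, hk1] at hdi; norm_num at hdi
    omega

private lemma even_choose_of_bit {n k i : ℕ} (hk : k.testBit i = true)
    (hn : n.testBit i = false) : n.choose k % 2 = 0 := by
  have h := @odd_choose_iff n k
  have : ¬ n.choose k % 2 = 1 := by
    intro h1
    have := (h.mp h1) i hk
    rw [hn] at this
    exact Bool.false_ne_true this
  omega

private lemma testBit_two_mul_pred_pow (c i : ℕ) :
    (2 * (2 ^ c - 1)).testBit i = decide (1 ≤ i ∧ i ≤ c) := by
  have h : 2 * (2 ^ c - 1) = 2 ^ 1 * (2 ^ c - 1) + 0 := by ring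
  rw [h, Nat.testBit_two_pow_mul_add _ (by norm_num)]
  split_ifs with hi
  · simp [Nat.zero_testBit]; omega
  · rw [Nat.testBit_two_pow_sub_one]
    exact decide_eq_decide.mpr (by omega)

private lemma mul3_mod2 {a b c : ℕ} (h : a % 2 = 0 ∨ b % 2 = 0 ∨ c % 2 = 0) :
    a * b * c % 2 = 0 := by
  rw [Nat.mul_mod, Nat.mul_mod a b]
  rcases h with h | h | h <;> rw [h] <;> simp

theorem stmt6 (n : ℕ) (hn : 0 < n) (hev : Even n) :
    (∑ k ∈ Finset.range n,
        (n - 1).choose k * ((n + k).choose (2 * k)) * ((2 * k).choose (k + 1))) ≡ 1 [MOD 2] := by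
  classical
  obtain ⟨v, m, hm, rfl⟩ := Nat.exists_eq_two_pow_mul_odd hn.ne'
  obtain ⟨u, hu⟩ := hm
  have hv : 1 ≤ v := by
    by_contra h
    have hv0 : v = 0 := by omega
    rw [hv0] at hev
    simp at hev
    rw [Nat.even_iff] at hev
    omega
  have hp1 : (1:ℕ) ≤ 2 ^ v := Nat.one_le_two_pow
  set N := 2 ^ v * m with hN
  set k0 := 2 ^ v - 1 with hk0
  -- decomposition of N - 1
  have hN1 : N - 1 = 2 ^ v * (2 * u) + (2 ^ v - 1) := by
    rw [hN, hu, show 2 ^ v * (2 * u + 1) = 2 ^ v * (2 * u) + 2 ^ v from by ring,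
      Nat.add_sub_assoc hp1]
  have key : ∀ k ∈ Finset.range N,
      (N - 1).choose k * ((N + k).choose (2 * k)) * ((2 * k).choose (k + 1)) % 2
        = if k = k0 then 1 else 0 := by
    intro k hk
    by_cases hkk : k = k0
    · subst hkk
      -- three odd factors
      have f1 : (N - 1).choose k0 % 2 = 1 := by
        rw [odd_choose_iff]
        intro i hi
        rw [hk0, Nat.testBit_two_pow_sub_one] at hi
        have hiv : i < v := by simpa using hi
        rw [hN1, Nat.testBit_two_pow_mul_add _ (by omega), if_pos hiv,
          Nat.testBit_two_pow_sub_one]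
        simpa using hiv
      have f2 : ((N + k0).choose (2 * k0)) % 2 = 1 := by
        rw [odd_choose_iff]
        intro i hi
        rw [hk0, testBit_two_mul_pred_pow] at hi
        have hiv : 1 ≤ i ∧ i ≤ v := by simpa using hi
        have hNk : N + k0 = 2 ^ v * m + (2 ^ v - 1) := rfl
        rw [hNk, Nat.testBit_two_pow_mul_add _ (by omega)]
        split_ifs with h
        · rw [Nat.testBit_two_pow_sub_one]; simpa using h
        · have hiv' : i = v := by omega
          rw [hiv', Nat.sub_self, Nat.testBit_zero]
          simp only [decide_eq_true_eq]; omega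
      have f3 : ((2 * k0).choose (k0 + 1)) % 2 = 1 := by
        rw [odd_choose_iff]
        intro i hi
        have hk01 : k0 + 1 = 2 ^ v := by omega
        rw [hk01, Nat.testBit_two_pow] at hi
        have hiv : v = i := by simpa using hi
        rw [hk0, testBit_two_mul_pred_pow]
        simp only [decide_eq_true_eq]
        omega
      rw [Nat.mul_mod, Nat.mul_mod ((N-1).choose k0), f1, f2, f3]
      simp
    · rw [if_neg hkk]
      -- find an even factor
      obtain ⟨a, t, ht, hkt⟩ := Nat.exists_eq_two_pow_mul_odd (n := k + 1) (by omega)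
      rcases Nat.lt_or_ge 1 t with ht3 | ht1
      · -- t ≥ 3 odd: third factor even
        obtain ⟨w, hw⟩ := ht
        have hw1 : 1 ≤ w := by omega
        obtain ⟨l, z, hz, hwz⟩ := Nat.exists_eq_two_pow_mul_odd (n := w) (by omega)
        apply mul3_mod2
        right; right
        apply even_choose_of_bit (i := a + 1 + l)
        · -- k+1 = 2^(a+1) * w + 2^a
          have hdec : k + 1 = 2 ^ (a + 1) * w + 2 ^ a := by
            rw [hkt, hw]; ring
          rw [hdec, Nat.testBit_two_pow_mul_add _ (Nat.pow_lt_pow_right (by norm_num) (by omega)),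
            if_neg (by omega)]
          have : a + 1 + l - (a + 1) = l := by omega
          rw [this, hwz, show 2 ^ l * z = 2 ^ l * z + 0 from by ring,
            Nat.testBit_two_pow_mul_add _ (Nat.one_le_two_pow), if_neg (by omega),
            Nat.sub_self, Nat.testBit_zero]
          simp [Nat.odd_iff.mp hz]
        · -- 2k = 2^(a+1) * (2w) + (2^(a+1) - 2)
          have hdec : 2 * k = 2 ^ (a + 1) * (2 * w) + (2 ^ (a + 1) - 2) := by
            have h1 : 2 * (k + 1) = 2 ^ (a + 1) * (2 * w) + 2 ^ (a + 1) := by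
              rw [hkt, hw]; ring
            have h2 : (2:ℕ) ≤ 2 ^ (a + 1) := by
              calc (2:ℕ) = 2 ^ 1 := by norm_num
              _ ≤ 2 ^ (a + 1) := Nat.pow_le_pow_right (by norm_num) (by omega)
            omega
          rw [hdec, Nat.testBit_two_pow_mul_add _ (by
              have : (0:ℕ) < 2 ^ (a+1) := Nat.pow_pos (by norm_num)
              omega),
            if_neg (by omega)]
          have : a + 1 + l - (a + 1) = l := by omega
          rw [this, hwz, show 2 * (2 ^ l * z) = 2 ^ (l + 1) * z + 0 from by ring,
            Nat.testBit_two_pow_mul_add _ (Nat.one_le_two_pow), if_pos (by omega)]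
          exact Nat.zero_testBit l
      · -- t = 1 : k + 1 = 2 ^ a
        have ht1' : t = 1 := by
          rcases ht with ⟨w, hw⟩; omega
        have hka : k + 1 = 2 ^ a := by rw [hkt, ht1']; ring
        rcases Nat.eq_zero_or_pos a with ha0 | ha1
        · -- k = 0
          have hk00 : k = 0 := by rw [ha0] at hka; omega
          subst hk00
          apply mul3_mod2
          right; right
          norm_num
        rcases lt_trichotomy a v with hav | hav | hav
        · -- 1 ≤ a < v : second factor even
          apply mul3_mod2
          right; left
          apply even_choose_of_bit (i := a)
          · have h2k : 2 * k = 2 * (2 ^ a - 1) := by omega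
            rw [h2k, testBit_two_mul_pred_pow]
            simp only [decide_eq_true_eq]
            omega
          · have hdec : N + k = 2 ^ a * (2 ^ (v - a) * m) + (2 ^ a - 1) := by
              have hpow : 2 ^ a * 2 ^ (v - a) = 2 ^ v := by
                rw [← pow_add]; congr 1; omega
              have : 2 ^ a * (2 ^ (v - a) * m) = N := by
                rw [hN, ← mul_assoc, hpow]
              omega
            rw [hdec, Nat.testBit_two_pow_mul_add _ (by omega), if_neg (by omega),
              Nat.sub_self, Nat.testBit_zero]
            have heven : 2 ∣ 2 ^ (v - a) * m := by
              apply Dvd.dvd.mul_right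
              exact dvd_pow_self 2 (by omega)
            simp only [decide_eq_false_iff_not]
            omega
        · exact absurd (by rw [hk0, ← hav]; omega : k = k0) hkk
        · -- a > v : first factor even
          apply mul3_mod2
          left
          apply even_choose_of_bit (i := v)
          · have : k = 2 ^ a - 1 := by omega
            rw [this, Nat.testBit_two_pow_sub_one]
            simpa using hav
          · rw [hN1, Nat.testBit_two_pow_mul_add _ (by omega), if_neg (by omega),
              Nat.sub_self, Nat.testBit_zero]
            simp only [decide_eq_false_iff_not]
            omega
  have hk0mem : k0 ∈ Finset.range N := by
    rw [Finset.mem_range, hN]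
    calc k0 < 2 ^ v := by omega
    _ ≤ 2 ^ v * m := Nat.le_mul_of_pos_right _ (by omega)
  rw [Nat.ModEq, Finset.sum_nat_mod, Finset.sum_congr rfl key,
    Finset.sum_ite_eq' (Finset.range N) k0 (fun _ => 1), if_pos hk0mem]
end

section
/- For every positive integer n, Σ_{k=1}^{n} C(n,k)·(-1)^{k-1}·H_k/k = H_{n,2}, where H_k = Σ_{j=1}^{k} 1/j and H_{n,2} = Σ_{j=1}^{n} 1/j^2 (an identity of rational numbers). -/
def harmonic1 (n : ℕ) : ℚ := ∑ j ∈ Finset.Icc 1 n, (1 : ℚ) / j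

def harmonic2 (n : ℕ) : ℚ := ∑ j ∈ Finset.Icc 1 n, (1 : ℚ) / (j : ℚ) ^ 2

lemma harmonic1_zero : harmonic1 0 = 0 := by simp [harmonic1]

lemma harmonic1_succ (n : ℕ) : harmonic1 (n+1) = harmonic1 n + 1/((n:ℚ)+1) := by
  rw [harmonic1, harmonic1, Finset.sum_Icc_succ_top (by omega)]
  push_cast; ring

lemma harmonic2_succ (n : ℕ) : harmonic2 (n+1) = harmonic2 n + 1/((n:ℚ)+1)^2 := by
  rw [harmonic2, harmonic2, Finset.sum_Icc_succ_top (by omega)]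
  push_cast; ring

lemma sum_Icc_one {M : Type*} [AddCommMonoid M] (f : ℕ → M) (n : ℕ) :
    ∑ k ∈ Finset.Icc 1 n, f k = ∑ i ∈ Finset.range n, f (i+1) := by
  induction n with
  | zero => simp
  | succ n ih => rw [Finset.sum_Icc_succ_top (by omega), ih, Finset.sum_range_succ]

lemma alt_choose (m : ℕ) :
    ∑ j ∈ Finset.range (m+1), (-1:ℚ)^(j+1) * ((m+1).choose (j+1)) = -1 := by
  have h := Int.alternating_sum_range_choose (n := m+1)
  rw [if_neg (Nat.succ_ne_zero m)] at h
  have hq : ∑ k ∈ Finset.range (m+2), (-1:ℚ)^k * ((m+1).choose k) = 0 := by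
    exact_mod_cast congrArg (fun z : ℤ => (z : ℚ)) h
  rw [Finset.sum_range_succ' _ (m+1)] at hq
  simp only [pow_zero, Nat.choose_zero_right, Nat.cast_one, mul_one, one_mul] at hq
  linarith

lemma lemA (m : ℕ) :
    ∑ k ∈ Finset.range (m+2), (-1:ℚ)^k * ((m+1).choose k) * harmonic1 k
      = -1/((m:ℚ)+1) := by
  have hm1 : ((m:ℚ)+1) ≠ 0 := by positivity
  set g : ℕ → ℚ := fun j => (-1:ℚ)^j * (m.choose j) * harmonic1 j with hg
  set h : ℕ → ℚ := fun j => (-1:ℚ)^(j+1) * ((m+1).choose (j+1)) / ((m:ℚ)+1) with hh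
  have key : ∀ j, (-1:ℚ)^(j+1) * (((m+1).choose (j+1)):ℚ) * harmonic1 (j+1)
      = (g (j+1) - g j) + h j := by
    intro j
    have hj1 : ((j:ℚ)+1) ≠ 0 := by positivity
    have hc : (((m+1).choose (j+1)) : ℚ) = m.choose j + m.choose (j+1) := by
      exact_mod_cast Nat.choose_succ_succ m j
    have hc2 : ((m:ℚ)+1) * (m.choose j) = (((m+1).choose (j+1)):ℚ) * ((j:ℚ)+1) := by
      exact_mod_cast Nat.add_one_mul_choose_eq m j
    have hc3 : ((m.choose j):ℚ) / ((j:ℚ)+1) = (((m+1).choose (j+1)):ℚ) / ((m:ℚ)+1) := by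
      rw [div_eq_div_iff hj1 hm1]; linarith
    simp only [hg, hh]
    rw [harmonic1_succ]
    linear_combination (-((-1:ℚ)^j) * (harmonic1 j + 1/((j:ℚ)+1))) * hc
      + (-((-1:ℚ)^j)) * hc3
  calc ∑ k ∈ Finset.range (m+2), (-1:ℚ)^k * ((m+1).choose k) * harmonic1 k
      = ∑ j ∈ Finset.range (m+1), ((g (j+1) - g j) + h j) := by
        rw [Finset.sum_range_succ' _ (m+1)]
        simp [harmonic1_zero, key]
    _ = (g (m+1) - g 0) + ∑ j ∈ Finset.range (m+1), h j := by
        rw [Finset.sum_add_distrib, Finset.sum_range_sub]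
    _ = -1/((m:ℚ)+1) := by
        have hs : ∑ j ∈ Finset.range (m+1), h j = -1/((m:ℚ)+1) := by
          simp only [hh, div_eq_mul_inv]
          rw [← Finset.sum_mul, alt_choose]
        rw [hs]
        simp [hg, harmonic1_zero, Nat.choose_succ_self]

lemma lemA' (n : ℕ) :
    ∑ i ∈ Finset.range (n+1), (-1:ℚ)^(i+1) * ((n+1).choose (i+1)) * harmonic1 (i+1)
      = -1/((n:ℚ)+1) := by
  have h := lemA n
  rw [Finset.sum_range_succ' _ (n+1)] at h
  simpa [harmonic1_zero] using h

theorem stmt8 (n : ℕ) (hn : 0 < n) :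
    ∑ k ∈ Finset.Icc 1 n, (n.choose k : ℚ) * (-1) ^ (k - 1) * harmonic1 k / k =
      harmonic2 n := by
  clear hn
  induction n with
  | zero => simp [harmonic2]
  | succ n ih =>
    rw [sum_Icc_one] at ih ⊢
    have hn1 : ((n:ℚ)+1) ≠ 0 := by positivity
    have key : ∀ i : ℕ, ((n+1).choose (i+1) : ℚ) * (-1) ^ ((i+1) - 1) * harmonic1 (i+1) / ((i+1 : ℕ) : ℚ)
        = (n.choose (i+1) : ℚ) * (-1) ^ ((i+1) - 1) * harmonic1 (i+1) / ((i+1 : ℕ) : ℚ)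
          + (-((-1:ℚ)^(i+1) * ((n+1).choose (i+1)) * harmonic1 (i+1))) / ((n:ℚ)+1) := by
      intro i
      have hi1 : ((i:ℚ)+1) ≠ 0 := by positivity
      have hc : (((n+1).choose (i+1)) : ℚ) = n.choose i + n.choose (i+1) := by
        exact_mod_cast Nat.choose_succ_succ n i
      have hc2 : ((n:ℚ)+1) * (n.choose i) = (((n+1).choose (i+1)):ℚ) * ((i:ℚ)+1) := by
        exact_mod_cast Nat.add_one_mul_choose_eq n i
      have hc3 : ((n.choose i):ℚ) / ((i:ℚ)+1) = (((n+1).choose (i+1)):ℚ) / ((n:ℚ)+1) := by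
        rw [div_eq_div_iff hi1 hn1]; linarith
      simp only [Nat.add_sub_cancel]
      push_cast
      linear_combination ((-1:ℚ)^i * harmonic1 (i+1) / ((i:ℚ)+1)) * hc
        + ((-1:ℚ)^i * harmonic1 (i+1)) * hc3
    calc ∑ i ∈ Finset.range (n+1),
          ((n+1).choose (i+1) : ℚ) * (-1) ^ ((i+1) - 1) * harmonic1 (i+1) / ((i+1 : ℕ) : ℚ)
        = ∑ i ∈ Finset.range (n+1),
            ((n.choose (i+1) : ℚ) * (-1) ^ ((i+1) - 1) * harmonic1 (i+1) / ((i+1 : ℕ) : ℚ)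
            + (-((-1:ℚ)^(i+1) * ((n+1).choose (i+1)) * harmonic1 (i+1))) / ((n:ℚ)+1)) := by
          exact Finset.sum_congr rfl fun i _ => key i
      _ = (∑ i ∈ Finset.range (n+1),
            (n.choose (i+1) : ℚ) * (-1) ^ ((i+1) - 1) * harmonic1 (i+1) / ((i+1 : ℕ) : ℚ))
          + (∑ i ∈ Finset.range (n+1),
            (-1:ℚ)^(i+1) * ((n+1).choose (i+1)) * harmonic1 (i+1)) * (-1/((n:ℚ)+1)) := by
          rw [Finset.sum_add_distrib]
          congr 1
          rw [Finset.sum_mul]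
          exact Finset.sum_congr rfl fun i _ => by ring
      _ = harmonic2 n + 1/((n:ℚ)+1)^2 := by
          rw [Finset.sum_range_succ, lemA', Nat.choose_succ_self, ih]
          push_cast
          field_simp
          ring
      _ = harmonic2 (n+1) := (harmonic2_succ n).symm
end

section
/- For every prime p > 3, the p-adic valuation of the rational number H_{p-1} = Σ_{k=1}^{p-1} 1/k is at least 2 (Wolstenholme's theorem). -/
open Finset

lemma zmod_inv_eq {n : ℕ} {a x : ZMod n} (ha : IsUnit a) (h : a * x = 1) : a⁻¹ = x := by
  calc a⁻¹ = a⁻¹ * (a * x) := by rw [h, mul_one]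
  _ = x := by rw [← mul_assoc, ZMod.inv_mul_of_unit a ha, one_mul]

lemma zmod_mul_inv {n : ℕ} {a b : ZMod n} (ha : IsUnit a) (hb : IsUnit b) :
    (a * b)⁻¹ = a⁻¹ * b⁻¹ := by
  apply zmod_inv_eq (ha.mul hb)
  have h1 := ZMod.mul_inv_of_unit a ha
  have h2 := ZMod.mul_inv_of_unit b hb
  calc a * b * (a⁻¹ * b⁻¹) = (a * a⁻¹) * (b * b⁻¹) := by ring
  _ = 1 := by rw [h1, h2, one_mul]

lemma aux_unit (p : ℕ) (hp : p.Prime) {k : ℕ} (hk1 : 1 ≤ k) (hk : k ≤ p - 1) :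
    IsUnit (k : ZMod (p^2)) := by
  rw [ZMod.isUnit_iff_coprime]
  have hkp : ¬ p ∣ k := by
    have : k < p := lt_of_le_of_lt hk (Nat.pred_lt hp.pos.ne')
    exact Nat.not_dvd_of_pos_of_lt hk1 this
  exact Nat.Coprime.pow_right 2 (Nat.coprime_comm.mp ((hp.coprime_iff_not_dvd).mpr hkp))

lemma p_mul_eq_zero (p : ℕ) [NeZero p] (x : ZMod (p^2))
    (h : ZMod.castHom (dvd_pow_self p two_ne_zero) (ZMod p) x = 0) :
    (p : ZMod (p^2)) * x = 0 := by
  have hx : ((x.val : ℕ) : ZMod (p^2)) = x := ZMod.natCast_rightInverse x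
  have hdvd : p ∣ x.val := by
    have h0 : ((x.val : ℕ) : ZMod p) = 0 := by
      rw [← map_natCast (ZMod.castHom (dvd_pow_self p two_ne_zero) (ZMod p)) x.val, hx, h]
    exact (ZMod.natCast_eq_zero_iff _ _).mp h0
  obtain ⟨c, hc⟩ := hdvd
  rw [← hx, hc]
  push_cast
  rw [← mul_assoc, ← Nat.cast_mul, ← pow_two, ZMod.natCast_self, zero_mul]

lemma sum_Icc_eq_sum_zmod (p : ℕ) [NeZero p] (hp : p.Prime) {M : Type*} [AddCommMonoid M]
    (f : ZMod p → M) (hf : f 0 = 0) :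
    ∑ k ∈ Finset.Icc 1 (p - 1), f (k : ZMod p) = ∑ x : ZMod p, f x := by
  have key : ∑ k ∈ Finset.Icc 1 (p - 1), f (k : ZMod p)
      = ∑ x ∈ Finset.univ.erase (0 : ZMod p), f x := by
    refine Finset.sum_nbij' (i := fun k => (k : ZMod p)) (j := fun x => x.val) ?_ ?_ ?_ ?_ ?_
    · intro k hk
      simp only [Finset.mem_Icc] at hk
      have hklt : k < p := lt_of_le_of_lt hk.2 (Nat.pred_lt hp.pos.ne')
      refine Finset.mem_erase.mpr ⟨?_, Finset.mem_univ _⟩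
      intro h0
      have hd := (ZMod.natCast_eq_zero_iff k p).mp h0
      have := Nat.le_of_dvd (by omega) hd
      omega
    · intro x hx
      rw [Finset.mem_erase] at hx
      rw [Finset.mem_Icc]
      have h1 : x.val ≠ 0 := fun h => hx.1 ((ZMod.val_eq_zero x).mp h)
      have h2 : x.val < p := x.val_lt
      show 1 ≤ x.val ∧ x.val ≤ p - 1
      omega
    · intro k hk
      simp only [Finset.mem_Icc] at hk
      exact ZMod.val_cast_of_lt (lt_of_le_of_lt hk.2 (Nat.pred_lt hp.pos.ne'))
    · intro x _; exact ZMod.natCast_rightInverse x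
    · intro k _; rfl
  rw [key, ← Finset.add_sum_erase _ f (Finset.mem_univ (0 : ZMod p)), hf, zero_add]

lemma key_sum_zero (p : ℕ) (hp : p.Prime) (h3 : 3 < p) :
    ∑ k ∈ Finset.Icc 1 (p - 1), ((k : ZMod (p^2)))⁻¹ = 0 := by
  haveI : Fact p.Prime := ⟨hp⟩
  haveI : NeZero p := ⟨hp.pos.ne'⟩
  set R := ZMod (p^2)
  set S := ∑ k ∈ Finset.Icc 1 (p - 1), ((k : R))⁻¹ with hS
  -- reflection
  have hrefl : S = ∑ k ∈ Finset.Icc 1 (p - 1), (((p - k : ℕ) : R))⁻¹ := by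
    rw [hS]
    apply Finset.sum_nbij' (fun k => p - k) (fun k => p - k)
    · intro k hk; simp only [Finset.mem_Icc] at hk ⊢; omega
    · intro k hk; simp only [Finset.mem_Icc] at hk ⊢; omega
    · intro k hk; simp only [Finset.mem_Icc] at hk; omega
    · intro k hk; simp only [Finset.mem_Icc] at hk; omega
    · intro k hk
      simp only [Finset.mem_Icc] at hk
      congr 2
      omega
  set T := ∑ k ∈ Finset.Icc 1 (p - 1), (((k * (p - k) : ℕ) : R))⁻¹ with hT
  have hpair : S + S = (p : R) * T := by
    nth_rewrite 2 [hrefl]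
    rw [← Finset.sum_add_distrib, hT, Finset.mul_sum]
    apply Finset.sum_congr rfl
    intro k hk
    simp only [Finset.mem_Icc] at hk
    have hk2 : 1 ≤ p - k ∧ p - k ≤ p - 1 := by omega
    have ha : IsUnit ((k : R)) := aux_unit p hp hk.1 hk.2
    have hb : IsUnit (((p - k : ℕ) : R)) := aux_unit p hp hk2.1 hk2.2
    have hmul : ((k * (p - k) : ℕ) : R) = (k : R) * ((p - k : ℕ) : R) := by rw [Nat.cast_mul]
    rw [hmul, zmod_mul_inv ha hb]
    have hab : (k : R) + ((p - k : ℕ) : R) = (p : R) := by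
      rw [← Nat.cast_add]
      congr 1
      omega
    have ha' := ZMod.mul_inv_of_unit _ ha
    have hb' := ZMod.mul_inv_of_unit _ hb
    calc ((k : R))⁻¹ + (((p - k : ℕ) : R))⁻¹
        = ((k : R) * ((k : R))⁻¹) * (((p - k : ℕ) : R))⁻¹
          + (((p - k : ℕ) : R) * (((p - k : ℕ) : R))⁻¹) * ((k : R))⁻¹ := by
          rw [ha', hb']; ring
      _ = ((k : R) + ((p - k : ℕ) : R)) * (((k : R))⁻¹ * (((p - k : ℕ) : R))⁻¹) := by ring
      _ = (p : R) * (((k : R))⁻¹ * (((p - k : ℕ) : R))⁻¹) := by rw [hab]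
  -- show p * T = 0
  have hT0 : (p : R) * T = 0 := by
    apply p_mul_eq_zero
    rw [hT, map_sum]
    have hcast : ∀ k ∈ Finset.Icc 1 (p - 1),
        ZMod.castHom (dvd_pow_self p two_ne_zero) (ZMod p) (((k * (p - k) : ℕ) : R))⁻¹
        = (-(((k : ZMod p)) ^ 2))⁻¹ := by
      intro k hk
      simp only [Finset.mem_Icc] at hk
      have hk2 : 1 ≤ p - k ∧ p - k ≤ p - 1 := by omega
      have ha : IsUnit ((k : R)) := aux_unit p hp hk.1 hk.2
      have hb : IsUnit (((p - k : ℕ) : R)) := aux_unit p hp hk2.1 hk2.2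
      have hmul : ((k * (p - k) : ℕ) : R) = (k : R) * ((p - k : ℕ) : R) := by rw [Nat.cast_mul]
      have hu : IsUnit ((k * (p - k) : ℕ) : R) := hmul ▸ ha.mul hb
      have h1 : ((k * (p - k) : ℕ) : R) * (((k * (p - k) : ℕ) : R))⁻¹ = 1 :=
        ZMod.mul_inv_of_unit _ hu
      have h2 := congrArg (ZMod.castHom (dvd_pow_self p two_ne_zero) (ZMod p)) h1
      rw [map_mul, map_natCast, map_one] at h2
      have h3 : (((k * (p - k) : ℕ) : ZMod p)) = -(((k : ZMod p)) ^ 2) := by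
        have : ((p - k : ℕ) : ZMod p) = -(k : ZMod p) := by
          have := Nat.cast_sub (le_of_lt (by omega : k < p)) (R := ZMod p)
          rw [Nat.cast_mul] at *
          rw [this, ZMod.natCast_self, zero_sub]
        rw [Nat.cast_mul, this]
        ring
      rw [h3] at h2
      exact (inv_eq_of_mul_eq_one_right h2).symm
    rw [Finset.sum_congr rfl hcast]
    have h0 : ((-((0 : ZMod p) ^ 2))⁻¹ : ZMod p) = 0 := by simp
    rw [sum_Icc_eq_sum_zmod p hp (fun x => (-(x ^ 2))⁻¹) h0]
    have hsq : ∀ x : ZMod p, (-(x ^ 2))⁻¹ = -((x⁻¹) ^ 2) := by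
      intro x
      rw [inv_neg, ← inv_pow]
    simp only [hsq]
    rw [Finset.sum_neg_distrib, neg_eq_zero]
    have hinv : ∑ x : ZMod p, (x⁻¹) ^ 2 = ∑ x : ZMod p, x ^ 2 := by
      apply Fintype.sum_equiv (Function.Involutive.toPerm _ (inv_involutive : Function.Involutive (fun x : ZMod p => x⁻¹)))
      intro x
      simp [Function.Involutive.toPerm]
    rw [hinv]
    have hcard : Fintype.card (ZMod p) = p := ZMod.card p
    have := FiniteField.sum_pow_lt_card_sub_one (K := ZMod p) 2 (by omega)
    exact this
  -- conclude
  have h2u : IsUnit ((2 : ℕ) : R) := by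
    rw [ZMod.isUnit_iff_coprime]
    have : ¬ p ∣ 2 := fun h => by have := Nat.le_of_dvd (by norm_num) h; omega
    exact Nat.Coprime.pow_right 2 (Nat.coprime_comm.mp ((hp.coprime_iff_not_dvd).mpr this))
  have h2S : ((2 : ℕ) : R) * S = 0 := by
    rw [show ((2 : ℕ) : R) = 2 by push_cast; ring, two_mul, hpair, hT0]
  calc S = (((2 : ℕ) : R))⁻¹ * (((2 : ℕ) : R) * S) := by
        rw [← mul_assoc, ZMod.inv_mul_of_unit _ h2u, one_mul]
    _ = 0 := by rw [h2S, mul_zero]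

theorem stmt10 (p : ℕ) (hp : p.Prime) (h3 : 3 < p) :
    (2 : ℤ) ≤ padicValRat p (harmonic1 (p - 1)) := by
  haveI : Fact p.Prime := ⟨hp⟩
  haveI : NeZero p := ⟨hp.pos.ne'⟩
  set D := (p - 1).factorial with hD
  set N := ∑ k ∈ Finset.Icc 1 (p - 1), D / k with hN
  have hDpos : 0 < D := Nat.factorial_pos _
  have hdvd : ∀ k ∈ Finset.Icc 1 (p - 1), k ∣ D := by
    intro k hk
    simp only [Finset.mem_Icc] at hk
    exact Nat.dvd_factorial hk.1 hk.2
  -- harmonic1 (p-1) = N / D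
  have hH : harmonic1 (p - 1) = (N : ℚ) / (D : ℚ) := by
    rw [harmonic1, hN]
    push_cast
    rw [Finset.sum_div]
    apply Finset.sum_congr rfl
    intro k hk
    simp only [Finset.mem_Icc] at hk
    have hkD := hdvd k (by simp [Finset.mem_Icc]; omega)
    rw [Nat.cast_div hkD (by exact_mod_cast (by omega : k ≠ 0))]
    rw [div_div, mul_comm ((k:ℚ)) ((D:ℚ)), ← div_div,
      div_self (by exact_mod_cast hDpos.ne' : (D:ℚ) ≠ 0)]
  -- p^2 ∣ N
  have hNmod : ((N : ℕ) : ZMod (p^2)) = 0 := by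
    rw [hN, Nat.cast_sum]
    have : ∀ k ∈ Finset.Icc 1 (p - 1), ((D / k : ℕ) : ZMod (p^2)) = (D : ZMod (p^2)) * ((k : ZMod (p^2)))⁻¹ := by
      intro k hk
      simp only [Finset.mem_Icc] at hk
      have ha : IsUnit ((k : ZMod (p^2))) := aux_unit p hp hk.1 hk.2
      have hmulk : (D / k) * k = D := Nat.div_mul_cancel (hdvd k (by simp [Finset.mem_Icc]; omega))
      have : ((D / k : ℕ) : ZMod (p^2)) * (k : ZMod (p^2)) = (D : ZMod (p^2)) := by
        rw [← Nat.cast_mul, hmulk]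
      calc ((D / k : ℕ) : ZMod (p^2))
          = ((D / k : ℕ) : ZMod (p^2)) * ((k : ZMod (p^2)) * ((k : ZMod (p^2)))⁻¹) := by
            rw [ZMod.mul_inv_of_unit _ ha, mul_one]
        _ = (((D / k : ℕ) : ZMod (p^2)) * (k : ZMod (p^2))) * ((k : ZMod (p^2)))⁻¹ := by ring
        _ = (D : ZMod (p^2)) * ((k : ZMod (p^2)))⁻¹ := by rw [this]
    rw [Finset.sum_congr rfl this, ← Finset.mul_sum, key_sum_zero p hp h3, mul_zero]
  have hp2N : p ^ 2 ∣ N := (ZMod.natCast_eq_zero_iff _ _).mp hNmod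
  -- N ≠ 0
  have hNpos : 0 < N := by
    rw [hN]
    apply Finset.sum_pos
    · intro k hk
      simp only [Finset.mem_Icc] at hk
      exact Nat.div_pos (Nat.le_of_dvd hDpos (hdvd k (by simp [Finset.mem_Icc]; omega))) (by omega)
    · exact ⟨1, by simp [Finset.mem_Icc]; omega⟩
  -- valuation of D is 0
  have hvD : padicValNat p D = 0 := by
    apply padicValNat.eq_zero_of_not_dvd
    rw [hD]
    intro hdvd'
    have := (Nat.Prime.dvd_factorial hp).mp hdvd'
    omega
  have hvN : 2 ≤ padicValNat p N := (padicValNat_dvd_iff_le hNpos.ne').mp hp2N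
  rw [hH, padicValRat.div (by exact_mod_cast hNpos.ne') (by exact_mod_cast hDpos.ne'),
    padicValRat.of_nat, padicValRat.of_nat, hvD]
  omega
end

section
/- For every prime p > 7, the p-adic valuation of the rational number H_{p-1} + (p/2)·H_{p-1,2} + (p^2/6)·H_{p-1,3} is at least 6, where H_{p-1,s} = Σ_{k=1}^{p-1} 1/k^s. -/
def harmonic3 (n : ℕ) : ℚ := ∑ j ∈ Finset.Icc 1 n, (1 : ℚ) / (j : ℚ) ^ 3

theorem stmt13 (p : ℕ) (hp : p.Prime) (h7 : 7 < p) :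
    harmonic1 (p - 1) + ((p : ℚ) / 2) * harmonic2 (p - 1)
        + ((p : ℚ) ^ 2 / 6) * harmonic3 (p - 1) = 0 ∨
      (6 : ℤ) ≤ padicValRat p
        (harmonic1 (p - 1) + ((p : ℚ) / 2) * harmonic2 (p - 1)
          + ((p : ℚ) ^ 2 / 6) * harmonic3 (p - 1)) := by
  haveI : Fact p.Prime := ⟨hp⟩
  set S : Finset ℕ := Finset.Icc 1 (p - 1) with hSdef
  have hmem : ∀ k ∈ S, 1 ≤ k ∧ k ≤ p - 1 := by
    intro k hk; rw [hSdef, Finset.mem_Icc] at hk; exact hk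
  have hnd : ∀ k ∈ S, ¬ p ∣ k := by
    intro k hk
    obtain ⟨h1, h2⟩ := hmem k hk
    exact Nat.not_dvd_of_pos_of_lt (by omega) (by omega)
  have hndp : ∀ k ∈ S, ¬ p ∣ (p - k) := by
    intro k hk
    obtain ⟨h1, h2⟩ := hmem k hk
    exact Nat.not_dvd_of_pos_of_lt (by omega) (by omega)
  have hfpos : ∀ k ∈ S, 0 < k * (p - k) := by
    intro k hk; obtain ⟨h1, h2⟩ := hmem k hk; exact Nat.mul_pos (by omega) (by omega)
  -- the key rational sum
  set T : ℚ := ∑ k ∈ S, (1 : ℚ) / ((k * (p - k) : ℕ) : ℚ) ^ 3 with hTdef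
  ---------------------------------------------------------------
  -- Step 1 : the expression equals p^5/12 * T
  ---------------------------------------------------------------
  set G : ℕ → ℚ := fun k =>
    (1 : ℚ) / k + ((p : ℚ) / 2) * ((1 : ℚ) / (k : ℚ) ^ 2)
      + ((p : ℚ) ^ 2 / 6) * ((1 : ℚ) / (k : ℚ) ^ 3) with hGdef
  have hexpr : harmonic1 (p - 1) + ((p : ℚ) / 2) * harmonic2 (p - 1)
      + ((p : ℚ) ^ 2 / 6) * harmonic3 (p - 1) = ∑ k ∈ S, G k := by
    simp only [harmonic1, harmonic2, harmonic3, Finset.mul_sum, hGdef, ← hSdef,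
      Finset.sum_add_distrib]
  have hrefl : ∑ k ∈ S, G (p - k) = ∑ k ∈ S, G k := by
    refine Finset.sum_nbij' (fun k => p - k) (fun k => p - k) ?_ ?_ ?_ ?_ ?_ <;>
      intro a ha <;> obtain ⟨h1, h2⟩ := hmem a ha <;> beta_reduce
    · rw [hSdef, Finset.mem_Icc]; omega
    · rw [hSdef, Finset.mem_Icc]; omega
    · omega
    · omega
    · rfl
  have hterm : ∀ k ∈ S, G k + G (p - k)
      = (p : ℚ) ^ 5 / 6 * ((1 : ℚ) / ((k * (p - k) : ℕ) : ℚ) ^ 3) := by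
    intro k hk
    obtain ⟨h1, h2⟩ := hmem k hk
    have hkp : k ≤ p := by omega
    have hcast : ((p - k : ℕ) : ℚ) = (p : ℚ) - (k : ℚ) := by
      exact Nat.cast_sub hkp
    have hcast2 : ((k * (p - k) : ℕ) : ℚ) = (k : ℚ) * ((p : ℚ) - (k : ℚ)) := by
      rw [Nat.cast_mul, hcast]
    have ha : (k : ℚ) ≠ 0 := Nat.cast_ne_zero.mpr (by omega)
    have hb : (p : ℚ) - (k : ℚ) ≠ 0 := by
      rw [← hcast]; exact Nat.cast_ne_zero.mpr (by omega)
    simp only [hGdef, hcast, hcast2]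
    field_simp
    ring
  have h2expr : 2 * ∑ k ∈ S, G k = (p : ℚ) ^ 5 / 6 * T := by
    have : 2 * ∑ k ∈ S, G k = ∑ k ∈ S, (G k + G (p - k)) := by
      conv_rhs => rw [Finset.sum_add_distrib]
      rw [hrefl]; ring
    rw [this, Finset.sum_congr rfl hterm, hTdef, Finset.mul_sum]
  have hA : harmonic1 (p - 1) + ((p : ℚ) / 2) * harmonic2 (p - 1)
      + ((p : ℚ) ^ 2 / 6) * harmonic3 (p - 1) = (p : ℚ) ^ 5 / 12 * T := by
    rw [hexpr]; linarith [h2expr]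
  ---------------------------------------------------------------
  -- Step 2 : T = N / M with p ∣ N, ¬ p ∣ M
  ---------------------------------------------------------------
  set M : ℕ := ∏ k ∈ S, (k * (p - k)) ^ 3 with hMdef
  set N : ℕ := ∑ k ∈ S, ∏ j ∈ S.erase k, (j * (p - j)) ^ 3 with hNdef
  have hMpos : 0 < M := Finset.prod_pos fun k hk => pow_pos (hfpos k hk) 3
  have hSne : S.Nonempty := ⟨1, by rw [hSdef, Finset.mem_Icc]; omega⟩
  have hNpos : 0 < N := by
    refine Finset.sum_pos (fun k hk => Finset.prod_pos fun j hj => ?_) hSne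
    exact pow_pos (hfpos j (Finset.mem_of_mem_erase hj)) 3
  have hMQ : (M : ℚ) ≠ 0 := Nat.cast_ne_zero.mpr (by omega)
  have hTNM : T = (N : ℚ) / (M : ℚ) := by
    rw [hTdef, hNdef, Nat.cast_sum, Finset.sum_div]
    refine Finset.sum_congr rfl fun k hk => ?_
    have hsplit : M = (k * (p - k)) ^ 3 * ∏ j ∈ S.erase k, (j * (p - j)) ^ 3 :=
      (Finset.mul_prod_erase S (fun j => (j * (p - j)) ^ 3) hk).symm
    have hx : ((k * (p - k) : ℕ) : ℚ) ≠ 0 := Nat.cast_ne_zero.mpr (by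
      have := hfpos k hk; omega)
    have hy : ((∏ j ∈ S.erase k, (j * (p - j)) ^ 3 : ℕ) : ℚ) ≠ 0 := by
      exact Nat.cast_ne_zero.mpr
        (Finset.prod_pos fun j hj =>
          pow_pos (hfpos j (Finset.mem_of_mem_erase hj)) 3).ne'
    have hMc : (M : ℚ) = ((k * (p - k) : ℕ) : ℚ) ^ 3
        * ((∏ j ∈ S.erase k, (j * (p - j)) ^ 3 : ℕ) : ℚ) := by
      rw [hsplit]; push_cast; ring
    rw [hMc, mul_comm (((k * (p - k) : ℕ) : ℚ) ^ 3), ← div_div, div_self hy]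
  -- p does not divide M
  have hpM : ¬ p ∣ M := by
    have hcop : Nat.Coprime p M := by
      refine Nat.Coprime.prod_right fun k hk => Nat.Coprime.pow_right 3 ?_
      exact Nat.Coprime.mul_right ((hp.coprime_iff_not_dvd).mpr (hnd k hk))
        ((hp.coprime_iff_not_dvd).mpr (hndp k hk))
    exact (hp.coprime_iff_not_dvd).mp hcop
  -- p divides N
  have hcastS : ∀ j ∈ S, (((j * (p - j)) ^ 3 : ℕ) : ZMod p) = -((j : ZMod p)) ^ 6 := by
    intro j hj
    obtain ⟨h1, h2⟩ := hmem j hj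
    have hjp : j ≤ p := by omega
    have hpj : ((p - j : ℕ) : ZMod p) = -(j : ZMod p) := by
      rw [Nat.cast_sub hjp, ZMod.natCast_self]; ring
    push_cast [hpj]
    ring
  have hu0 : ∀ j ∈ S, ((j : ZMod p)) ≠ 0 := by
    intro j hj h
    exact hnd j hj ((ZMod.natCast_eq_zero_iff j p).mp h)
  have hsum6 : ∑ k ∈ S, (((k : ZMod p))⁻¹) ^ 6 = 0 := by
    have h1 : ∑ k ∈ S, (((k : ZMod p))⁻¹) ^ 6
        = ∑ x ∈ (Finset.univ : Finset (ZMod p)).erase 0, (x⁻¹) ^ 6 := by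
      refine Finset.sum_nbij' (fun k => ((k : ZMod p))) (fun x => x.val) ?_ ?_ ?_ ?_ ?_
      · intro a ha
        exact Finset.mem_erase.mpr ⟨hu0 a ha, Finset.mem_univ _⟩
      · intro x hx
        have hx0 : x ≠ 0 := (Finset.mem_erase.mp hx).1
        have hval : x.val ≠ 0 := fun h => hx0 ((ZMod.val_eq_zero x).mp h)
        have hlt : x.val < p := ZMod.val_lt x
        beta_reduce
        rw [hSdef, Finset.mem_Icc]
        omega
      · intro a ha
        obtain ⟨ha1, ha2⟩ := hmem a ha
        exact ZMod.val_cast_of_lt (by omega)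
      · intro x hx
        exact ZMod.natCast_zmod_val x
      · intro a ha; rfl
    have h2 : ∑ x ∈ (Finset.univ : Finset (ZMod p)).erase 0, (x⁻¹) ^ 6
        = ∑ x : ZMod p, (x⁻¹) ^ 6 := by
      refine Finset.sum_erase _ ?_
      norm_num
    have h3 : ∑ x : ZMod p, (x⁻¹) ^ 6 = ∑ x : ZMod p, x ^ 6 :=
      Fintype.sum_bijective _ inv_involutive.bijective _ _ fun x => rfl
    rw [h1, h2, h3]
    exact FiniteField.sum_pow_lt_card_sub_one (ZMod p) 6 (by rw [ZMod.card]; omega)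
  have hpN : p ∣ N := by
    have hNcast : (N : ZMod p) = 0 := by
      have e1 : (N : ZMod p)
          = ∑ k ∈ S, ∏ j ∈ S.erase k, (((j * (p - j)) ^ 3 : ℕ) : ZMod p) := by
        rw [hNdef]; push_cast; rfl
      have e2 : (N : ZMod p)
          = ∑ k ∈ S, ∏ j ∈ S.erase k, (-((j : ZMod p)) ^ 6) := by
        rw [e1]
        exact Finset.sum_congr rfl fun k hk => Finset.prod_congr rfl fun j hj =>
          hcastS j (Finset.mem_of_mem_erase hj)
      have e3 : ∀ k ∈ S, ∏ j ∈ S.erase k, (-((j : ZMod p)) ^ 6)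
          = (-(((k : ZMod p))⁻¹) ^ 6) * ∏ j ∈ S, (-((j : ZMod p)) ^ 6) := by
        intro k hk
        have hsplit := Finset.mul_prod_erase S (fun j => (-((j : ZMod p)) ^ 6)) hk
        have hk0 : ((k : ZMod p)) ≠ 0 := hu0 k hk
        have hknz : (-((k : ZMod p)) ^ 6) ≠ 0 := by
          simpa using pow_ne_zero 6 hk0
        rw [← hsplit]
        rw [show (-(((k : ZMod p))⁻¹) ^ 6) * ((-((k : ZMod p)) ^ 6)
            * ∏ j ∈ S.erase k, (-((j : ZMod p)) ^ 6))
            = ((((k : ZMod p))⁻¹ * (k : ZMod p)) ^ 6)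
            * ∏ j ∈ S.erase k, (-((j : ZMod p)) ^ 6) by ring]
        rw [inv_mul_cancel₀ hk0]
        simp
      rw [e2, Finset.sum_congr rfl e3, ← Finset.sum_mul]
      have hzero : ∑ k ∈ S, (-(((k : ZMod p))⁻¹) ^ 6) = 0 := by
        rw [Finset.sum_neg_distrib, hsum6, neg_zero]
      rw [hzero, zero_mul]
    exact (ZMod.natCast_eq_zero_iff N p).mp hNcast
  ---------------------------------------------------------------
  -- Step 3 : conclusion
  ---------------------------------------------------------------
  right
  have hNQ : (N : ℚ) ≠ 0 := Nat.cast_ne_zero.mpr (by omega)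
  have hpQ : (p : ℚ) ≠ 0 := Nat.cast_ne_zero.mpr hp.pos.ne'
  have hfrac : (p : ℚ) ^ 5 / 12 ≠ 0 := by positivity
  have hTne : T ≠ 0 := by rw [hTNM]; exact div_ne_zero hNQ hMQ
  rw [hA, padicValRat.mul hfrac hTne, hTNM,
    padicValRat.div (pow_ne_zero 5 hpQ) (by norm_num : (12 : ℚ) ≠ 0),
    padicValRat.div hNQ hMQ, padicValRat.pow (p : ℚ), padicValRat.self hp.one_lt]
  have h12 : padicValRat p (12 : ℚ) = 0 := by
    rw [show (12 : ℚ) = ((12 : ℕ) : ℚ) by norm_num, padicValRat.of_nat,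
      padicValNat.eq_zero_of_not_dvd]
    · rfl
    · intro h
      have h12' := Nat.le_of_dvd (by norm_num) h
      interval_cases p <;> first | omega | exact absurd hp (by decide)
  have hNv : (1 : ℤ) ≤ padicValRat p ((N : ℕ) : ℚ) := by
    rw [padicValRat.of_nat]
    exact_mod_cast one_le_padicValNat_of_dvd hNpos.ne' hpN
  have hMv : padicValRat p ((M : ℕ) : ℚ) = 0 := by
    rw [padicValRat.of_nat, padicValNat.eq_zero_of_not_dvd hpM]; rfl
  rw [h12, hMv]
  push_cast
  linarith
end

section
/- For every nonnegative integer n, if A_n ≡ 8j + 4i + 1 (mod 16) with i, j ∈ {0,1}, then β_n ≡ 2(i+j) + 1 (mod 4), where A_n = Σ_{k=0}^{n} C(n,k)^2·C(n+k,k)^2 and β_n = Σ_{k=0}^{n} C(n,k)^2·C(n+k,k). In particular, β_n ≡ 1 (mod 4) iff A_n ≡ 1 or 13 (mod 16), and β_n ≡ 3 (mod 4) iff A_n ≡ 5 or 9 (mod 16). -/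
def apheryA (n : ℕ) : ℕ :=
  ∑ k ∈ Finset.range (n + 1), (Nat.choose n k) ^ 2 * (Nat.choose (n + k) k) ^ 2

open Finset Nat

/-! Auxiliary lemmas -/

private lemma choose_pow2_mod_two : ∀ (b m : ℕ), Nat.choose m (2^b) % 2 = m / 2^b % 2
  | 0, m => by simp
  | b+1, m => by
    have h := Choose.choose_modEq_choose_mod_mul_choose_div_nat (p := 2) (n := m) (k := 2^(b+1))
    have h2 : 2^(b+1) % 2 = 0 := by simp [pow_succ]
    have h3 : 2^(b+1) / 2 = 2^b := by rw [pow_succ]; exact Nat.mul_div_cancel _ (by norm_num)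
    rw [h2, h3] at h
    simp only [Nat.choose_zero_right, one_mul] at h
    rw [Nat.ModEq] at h
    rw [h, choose_pow2_mod_two b (m/2), Nat.div_div_eq_div_mul, ← pow_succ']

private lemma central_pow2 (a : ℕ) : ∃ u, Nat.choose (2^(a+1)) (2^a) = 2 * u ∧ u % 2 = 1 := by
  have hkn : 2^a ≤ 2^(a+1) := Nat.pow_le_pow_right (by norm_num) (Nat.le_succ a)
  have hm : multiplicity 2 (2^a) = a := multiplicity_pow_self_of_prime Nat.prime_two.prime a
  have he := Nat.Prime.emultiplicity_choose_prime_pow Nat.prime_two hkn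
    (Nat.pos_of_ne_zero (by positivity)).ne'
  rw [hm] at he
  have he1 : emultiplicity 2 (Nat.choose (2^(a+1)) (2^a)) = 1 := by
    rw [he]; simp
  have hdvd : 2 ∣ Nat.choose (2^(a+1)) (2^a) := by
    have := pow_dvd_of_le_emultiplicity (a := 2) (b := Nat.choose (2^(a+1)) (2^a)) (k := 1)
      (by rw [he1]; simp)
    simpa using this
  obtain ⟨u, hu⟩ := hdvd
  refine ⟨u, hu, ?_⟩
  by_contra hodd
  have : 2 ∣ u := by omega
  obtain ⟨v, hv⟩ := this
  have h4 : (2:ℕ)^2 ∣ Nat.choose (2^(a+1)) (2^a) := ⟨v, by rw [hu, hv]; ring⟩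
  have := le_emultiplicity_of_pow_dvd h4
  rw [he1] at this
  norm_num at this

private lemma four_dvd_central (k : ℕ) (hk : k ≠ 0) (hp : ∀ a, k ≠ 2^a) :
    4 ∣ Nat.choose (k + k) k := by
  set b := Nat.log 2 (k + k) + 1 with hb
  have hnb : Nat.log 2 (k + k) < b := by omega
  have he := Nat.Prime.emultiplicity_choose' (p := 2) (n := k) (k := k) (b := b) Nat.prime_two hnb
  set b2 := Nat.log 2 k with hb2
  have hk2 : 2 ^ b2 ≤ k := Nat.pow_log_le_self 2 hk
  have hk2' : k < 2 ^ (b2 + 1) := Nat.lt_pow_succ_log_self (by norm_num) k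
  set r := k - 2 ^ b2 with hr
  have hrpos : r ≠ 0 := by
    intro h0
    exact hp b2 (by omega)
  have hrlt : r < 2 ^ b2 := by omega
  set b1 := Nat.log 2 r with hb1
  have hr1 : 2 ^ b1 ≤ r := Nat.pow_log_le_self 2 hrpos
  have hr1' : r < 2 ^ (b1 + 1) := Nat.lt_pow_succ_log_self (by norm_num) r
  have hb12 : b1 < b2 := Nat.log_lt_of_lt_pow hrpos hrlt
  have mem2 : b2 + 1 ∈ Finset.filter (fun i => 2 ^ i ≤ k % 2 ^ i + k % 2 ^ i) (Finset.Ico 1 b) := by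
    rw [Finset.mem_filter, Finset.mem_Ico]
    refine ⟨⟨by omega, ?_⟩, ?_⟩
    · have : 2 ^ (b2 + 1) ≤ k + k := by omega
      have := (Nat.le_log_iff_pow_le (by norm_num) (by omega)).2 this
      omega
    · have : k % 2 ^ (b2 + 1) = k := Nat.mod_eq_of_lt hk2'
      rw [this, pow_succ]
      omega
  have mem1 : b1 + 1 ∈ Finset.filter (fun i => 2 ^ i ≤ k % 2 ^ i + k % 2 ^ i) (Finset.Ico 1 b) := by
    rw [Finset.mem_filter, Finset.mem_Ico]
    have hdvd : (2:ℕ) ^ (b1 + 1) ∣ 2 ^ b2 := pow_dvd_pow 2 (by omega)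
    have hkr : k % 2 ^ (b1 + 1) = r := by
      obtain ⟨c, hc⟩ := hdvd
      have hkeq : k = 2 ^ (b1 + 1) * c + r := by omega
      rw [hkeq, Nat.mul_add_mod, Nat.mod_eq_of_lt hr1']
    refine ⟨⟨by omega, ?_⟩, ?_⟩
    · have h1 : 2 ^ (b1 + 1) ≤ k + k := by
        have : (2:ℕ) ^ (b1+1) ≤ 2 ^ b2 := Nat.pow_le_pow_right (by norm_num) (by omega)
        omega
      have := (Nat.le_log_iff_pow_le (by norm_num) (show k + k ≠ 0 by omega)).2 h1
      omega
    · rw [hkr, pow_succ]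
      omega
  have hcard : 2 ≤ (Finset.filter (fun i => 2 ^ i ≤ k % 2 ^ i + k % 2 ^ i) (Finset.Ico 1 b)).card := by
    have hsub : ({b1 + 1, b2 + 1} : Finset ℕ)
        ⊆ Finset.filter (fun i => 2 ^ i ≤ k % 2 ^ i + k % 2 ^ i) (Finset.Ico 1 b) := by
      intro x hx
      simp only [Finset.mem_insert, Finset.mem_singleton] at hx
      rcases hx with h | h <;> subst h <;> assumption
    have : ({b1 + 1, b2 + 1} : Finset ℕ).card = 2 := by
      rw [Finset.card_insert_of_notMem (by simp; omega), Finset.card_singleton]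
    have hle := Finset.card_le_card hsub
    omega
  have h2le : (2:ℕ∞) ≤ emultiplicity 2 (Nat.choose (k + k) k) := by
    rw [he]
    exact_mod_cast hcard
  have := pow_dvd_of_le_emultiplicity h2le
  simpa using this

private lemma key_identity (n k : ℕ) (hk : k ≤ n) :
    Nat.choose n k * Nat.choose (n + k) k = Nat.choose (k + k) k * Nat.choose (n + k) (k + k) := by
  have h := Nat.choose_mul (n := n + k) (k := k + k) (s := k) (by omega)
  have h1 : n + k - k = n := by omega
  have h2 : k + k - k = k := by omega
  rw [h1, h2] at h
  calc Nat.choose n k * Nat.choose (n + k) k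
      = Nat.choose (n + k) k * Nat.choose n k := by ring
    _ = Nat.choose (n + k) (k + k) * Nat.choose (k + k) k := h.symm
    _ = _ := by ring

private lemma termA_zero (n k : ℕ) (hk : k ≤ n) (h0 : k ≠ 0) (hp : ∀ a, k ≠ 2^a) :
    16 ∣ (Nat.choose n k)^2 * (Nat.choose (n + k) k)^2 := by
  obtain ⟨c, hc⟩ := four_dvd_central k h0 hp
  rw [← mul_pow]
  rw [key_identity n k hk, hc]
  exact ⟨(c * Nat.choose (n+k) (k+k))^2, by ring⟩

private lemma termB_zero (n k : ℕ) (hk : k ≤ n) (h0 : k ≠ 0) (hp : ∀ a, k ≠ 2^a) :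
    4 ∣ (Nat.choose n k)^2 * Nat.choose (n + k) k := by
  obtain ⟨c, hc⟩ := four_dvd_central k h0 hp
  have : (Nat.choose n k)^2 * Nat.choose (n + k) k
      = Nat.choose n k * (Nat.choose n k * Nat.choose (n + k) k) := by ring
  rw [this, key_identity n k hk, hc]
  exact ⟨Nat.choose n k * (c * Nat.choose (n+k) (k+k)), by ring⟩

private lemma pow2_add_self (a : ℕ) : 2^a + 2^a = 2^(a+1) := by rw [pow_succ]; ring

private lemma termA_pow2 (n a : ℕ) (hk : 2^a ≤ n) :
    (Nat.choose n (2^a))^2 * (Nat.choose (n + 2^a) (2^a))^2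
      ≡ 4 * ((n + 2^a) / 2^(a+1) % 2) [MOD 16] := by
  obtain ⟨u, hu, huo⟩ := central_pow2 a
  have hid := key_identity n (2^a) hk
  rw [pow2_add_self a, hu] at hid
  set w := u * Nat.choose (n + 2^a) (2^(a+1)) with hw
  have hL : (Nat.choose n (2^a))^2 * (Nat.choose (n + 2^a) (2^a))^2 = 4 * w^2 := by
    rw [← mul_pow, hid, hw]; ring
  have hwm : w % 2 = (n + 2^a) / 2^(a+1) % 2 := by
    rw [hw, Nat.mul_mod, huo, one_mul, Nat.mod_mod_of_dvd _ (dvd_refl 2),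
      choose_pow2_mod_two (a+1) (n + 2^a)]
  have hexp : ∃ t, 4 * w^2 = 16 * t + 4 * (w % 2) := by
    refine ⟨w/2 * (w/2) + (w/2) * (w % 2), ?_⟩
    have h := Nat.div_add_mod w 2
    have hr : w % 2 = 0 ∨ w % 2 = 1 := Nat.mod_two_eq_zero_or_one w
    rcases hr with hr | hr <;> nlinarith [h]
  obtain ⟨t, ht⟩ := hexp
  rw [hL, ← hwm]
  unfold Nat.ModEq
  omega

private lemma termB_pow2 (n a : ℕ) (hk : 2^a ≤ n) :
    (Nat.choose n (2^a))^2 * Nat.choose (n + 2^a) (2^a)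
      ≡ 2 * ((n / 2^a % 2) * ((n + 2^a) / 2^(a+1) % 2)) [MOD 4] := by
  obtain ⟨u, hu, huo⟩ := central_pow2 a
  have hid := key_identity n (2^a) hk
  rw [pow2_add_self a, hu] at hid
  set w := Nat.choose n (2^a) * (u * Nat.choose (n + 2^a) (2^(a+1))) with hw
  have hL : (Nat.choose n (2^a))^2 * Nat.choose (n + 2^a) (2^a) = 2 * w := by
    have : (Nat.choose n (2^a))^2 * Nat.choose (n + 2^a) (2^a)
        = Nat.choose n (2^a) * (Nat.choose n (2^a) * Nat.choose (n + 2^a) (2^a)) := by ring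
    rw [this, hid, hw]; ring
  have hb : n / 2^a % 2 ≤ 1 := by omega
  have hx : (n + 2^a) / 2^(a+1) % 2 ≤ 1 := by omega
  have hwm : w % 2 = (n / 2^a % 2) * ((n + 2^a) / 2^(a+1) % 2) := by
    rw [hw, Nat.mul_mod, Nat.mul_mod u, huo, one_mul,
      Nat.mod_mod_of_dvd _ (dvd_refl 2), choose_pow2_mod_two (a+1) (n + 2^a),
      choose_pow2_mod_two a n]
    exact Nat.mod_eq_of_lt (lt_of_le_of_lt (Nat.mul_le_mul hb hx) one_lt_two)
  have hexp : ∃ t, 2 * w = 4 * t + 2 * (w % 2) := by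
    refine ⟨w / 2, ?_⟩
    have h := Nat.div_add_mod w 2
    omega
  obtain ⟨t, ht⟩ := hexp
  rw [hL, ← hwm]
  unfold Nat.ModEq
  omega

section decomp
variable (n : ℕ)

private lemma pow_mem_range (hn : n ≠ 0) {a : ℕ} (ha : a < Nat.log 2 n + 1) : 2^a ≤ n := by
  calc 2^a ≤ 2^(Nat.log 2 n) := Nat.pow_le_pow_right (by norm_num) (by omega)
    _ ≤ n := Nat.pow_log_le_self 2 hn

private lemma not_pow_of_notin (hn : n ≠ 0) {x : ℕ} (hx : x ≤ n)
    (hnot : ∀ a < Nat.log 2 n + 1, x ≠ 2^a) : ∀ a, x ≠ 2^a := by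
  intro a hxa
  rcases lt_or_ge a (Nat.log 2 n + 1) with h | h
  · exact hnot a h hxa
  · have h1 : n < 2^(Nat.log 2 n + 1) := Nat.lt_pow_succ_log_self (by norm_num) n
    have h2 : 2^(Nat.log 2 n + 1) ≤ 2^a := Nat.pow_le_pow_right (by norm_num) h
    omega

private lemma A_cast (hn : n ≠ 0) :
    ((apheryA n : ℕ) : ZMod 16)
      = 1 + 4 * ((∑ a ∈ range (Nat.log 2 n + 1), (n + 2^a) / 2^(a+1) % 2 : ℕ) : ZMod 16) := by
  set L := Nat.log 2 n + 1 with hL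
  set P : Finset ℕ := (range L).image (fun a => 2^a) with hP
  have h0P : 0 ∉ P := by
    simp only [hP, Finset.mem_image, Finset.mem_range]
    rintro ⟨a, -, ha⟩
    exact absurd ha.symm (Nat.two_pow_pos a).ne
  have hsub : insert 0 P ⊆ range (n + 1) := by
    intro x hx
    rcases Finset.mem_insert.1 hx with rfl | hx
    · simp [Nat.pos_of_ne_zero hn]
    · simp only [hP, Finset.mem_image, Finset.mem_range] at hx
      obtain ⟨a, ha, rfl⟩ := hx
      simp only [Finset.mem_range]
      have := pow_mem_range n hn ha
      omega
  have hzero : ∀ x ∈ range (n + 1), x ∉ insert 0 P →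
      (((Nat.choose n x)^2 * (Nat.choose (n + x) x)^2 : ℕ) : ZMod 16) = 0 := by
    intro x hx hnx
    simp only [Finset.mem_insert, not_or] at hnx
    obtain ⟨hx0, hxP⟩ := hnx
    simp only [hP, Finset.mem_image, Finset.mem_range, not_exists, not_and] at hxP
    have hxn : x ≤ n := by simp only [Finset.mem_range] at hx; omega
    have hnp : ∀ a, x ≠ 2^a := not_pow_of_notin n hn hxn (fun a ha h => hxP a ha h.symm)
    rw [ZMod.natCast_eq_zero_iff]
    exact termA_zero n x hxn hx0 hnp
  have key : ((apheryA n : ℕ) : ZMod 16)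
      = ∑ x ∈ insert 0 P, (((Nat.choose n x)^2 * (Nat.choose (n + x) x)^2 : ℕ) : ZMod 16) := by
    rw [apheryA, Nat.cast_sum]
    exact (Finset.sum_subset hsub hzero).symm
  rw [key, Finset.sum_insert h0P]
  have h00 : (((Nat.choose n 0)^2 * (Nat.choose (n + 0) 0)^2 : ℕ) : ZMod 16) = 1 := by simp
  rw [h00]
  have himg : ∑ x ∈ P, (((Nat.choose n x)^2 * (Nat.choose (n + x) x)^2 : ℕ) : ZMod 16)
      = ∑ a ∈ range L, (((Nat.choose n (2^a))^2 * (Nat.choose (n + 2^a) (2^a))^2 : ℕ) : ZMod 16) := by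
    rw [hP, Finset.sum_image]
    intro a _ b _ hab
    exact Nat.pow_right_injective (le_refl 2) hab
  rw [himg]
  have hterm : ∀ a ∈ range L,
      (((Nat.choose n (2^a))^2 * (Nat.choose (n + 2^a) (2^a))^2 : ℕ) : ZMod 16)
        = ((4 * ((n + 2^a) / 2^(a+1) % 2) : ℕ) : ZMod 16) := by
    intro a ha
    rw [ZMod.natCast_eq_natCast_iff]
    exact termA_pow2 n a (pow_mem_range n hn (Finset.mem_range.1 ha))
  rw [Finset.sum_congr rfl hterm]
  push_cast
  rw [Finset.mul_sum]

private lemma B_cast (hn : n ≠ 0) :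
    ((apheryBeta n : ℕ) : ZMod 4)
      = 1 + 2 * ((∑ a ∈ range (Nat.log 2 n + 1),
          (n / 2^a % 2) * ((n + 2^a) / 2^(a+1) % 2) : ℕ) : ZMod 4) := by
  set L := Nat.log 2 n + 1 with hL
  set P : Finset ℕ := (range L).image (fun a => 2^a) with hP
  have h0P : 0 ∉ P := by
    simp only [hP, Finset.mem_image, Finset.mem_range]
    rintro ⟨a, -, ha⟩
    exact absurd ha.symm (Nat.two_pow_pos a).ne
  have hsub : insert 0 P ⊆ range (n + 1) := by
    intro x hx
    rcases Finset.mem_insert.1 hx with rfl | hx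
    · simp [Nat.pos_of_ne_zero hn]
    · simp only [hP, Finset.mem_image, Finset.mem_range] at hx
      obtain ⟨a, ha, rfl⟩ := hx
      simp only [Finset.mem_range]
      have := pow_mem_range n hn ha
      omega
  have hzero : ∀ x ∈ range (n + 1), x ∉ insert 0 P →
      (((Nat.choose n x)^2 * Nat.choose (n + x) x : ℕ) : ZMod 4) = 0 := by
    intro x hx hnx
    simp only [Finset.mem_insert, not_or] at hnx
    obtain ⟨hx0, hxP⟩ := hnx
    simp only [hP, Finset.mem_image, Finset.mem_range, not_exists, not_and] at hxP
    have hxn : x ≤ n := by simp only [Finset.mem_range] at hx; omega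
    have hnp : ∀ a, x ≠ 2^a := not_pow_of_notin n hn hxn (fun a ha h => hxP a ha h.symm)
    rw [ZMod.natCast_eq_zero_iff]
    exact termB_zero n x hxn hx0 hnp
  have key : ((apheryBeta n : ℕ) : ZMod 4)
      = ∑ x ∈ insert 0 P, (((Nat.choose n x)^2 * Nat.choose (n + x) x : ℕ) : ZMod 4) := by
    rw [apheryBeta, Nat.cast_sum]
    exact (Finset.sum_subset hsub hzero).symm
  rw [key, Finset.sum_insert h0P]
  have h00 : (((Nat.choose n 0)^2 * Nat.choose (n + 0) 0 : ℕ) : ZMod 4) = 1 := by simp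
  rw [h00]
  have himg : ∑ x ∈ P, (((Nat.choose n x)^2 * Nat.choose (n + x) x : ℕ) : ZMod 4)
      = ∑ a ∈ range L, (((Nat.choose n (2^a))^2 * Nat.choose (n + 2^a) (2^a) : ℕ) : ZMod 4) := by
    rw [hP, Finset.sum_image]
    intro a _ b _ hab
    exact Nat.pow_right_injective (le_refl 2) hab
  rw [himg]
  have hterm : ∀ a ∈ range L,
      (((Nat.choose n (2^a))^2 * Nat.choose (n + 2^a) (2^a) : ℕ) : ZMod 4)
        = ((2 * ((n / 2^a % 2) * ((n + 2^a) / 2^(a+1) % 2)) : ℕ) : ZMod 4) := by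
    intro a ha
    rw [ZMod.natCast_eq_natCast_iff]
    exact termB_pow2 n a (pow_mem_range n hn (Finset.mem_range.1 ha))
  rw [Finset.sum_congr rfl hterm]
  push_cast
  rw [Finset.mul_sum]

end decomp

private lemma bit_step (n a : ℕ) :
    (n + 2^a) / 2^(a+1) % 2 + n / 2^a % 2
      = 2 * ((n / 2^a % 2) * ((n + 2^a) / 2^(a+1) % 2)) + n / 2^(a+1) % 2 := by
  have hpos : 0 < 2^a := Nat.two_pow_pos a
  have hq : (n + 2^a) / 2^a = n / 2^a + 1 := Nat.add_div_right n hpos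
  have h1 : (n + 2^a) / 2^(a+1) = (n / 2^a + 1) / 2 := by
    rw [pow_succ, ← Nat.div_div_eq_div_mul, hq]
  have h2 : n / 2^(a+1) = (n / 2^a) / 2 := by
    rw [pow_succ, ← Nat.div_div_eq_div_mul]
  rw [h1, h2]
  set q := n / 2^a with hqd
  rcases Nat.mod_two_eq_zero_or_one q with h | h
  · have hz : q % 2 * ((q + 1) / 2 % 2) = 0 := by rw [h]; ring
    rw [hz]; omega
  · have hz : q % 2 * ((q + 1) / 2 % 2) = (q + 1) / 2 % 2 := by rw [h]; ring
    rw [hz]; omega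

private lemma sum_bits (n : ℕ) (hn : n ≠ 0) :
    (∑ a ∈ range (Nat.log 2 n + 1), (n + 2^a) / 2^(a+1) % 2) + n % 2
      = 2 * ∑ a ∈ range (Nat.log 2 n + 1), (n / 2^a % 2) * ((n + 2^a) / 2^(a+1) % 2) := by
  set L := Nat.log 2 n + 1 with hL
  have hsum : ∑ a ∈ range L, ((n + 2^a) / 2^(a+1) % 2 + n / 2^a % 2)
      = ∑ a ∈ range L, (2 * ((n / 2^a % 2) * ((n + 2^a) / 2^(a+1) % 2)) + n / 2^(a+1) % 2) :=
    Finset.sum_congr rfl (fun a _ => bit_step n a)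
  rw [Finset.sum_add_distrib, Finset.sum_add_distrib, ← Finset.mul_sum] at hsum
  have hs1 : ∑ a ∈ range (L+1), n / 2^a % 2
      = (∑ a ∈ range L, n / 2^(a+1) % 2) + n / 2^0 % 2 := Finset.sum_range_succ' _ L
  have hs2 : ∑ a ∈ range (L+1), n / 2^a % 2
      = (∑ a ∈ range L, n / 2^a % 2) + n / 2^L % 2 := Finset.sum_range_succ _ L
  have hLz : n / 2^L % 2 = 0 := by
    have : n < 2^L := Nat.lt_pow_succ_log_self (by norm_num) n
    rw [Nat.div_eq_of_lt this]
  have h00 : n / 2^0 % 2 = n % 2 := by norm_num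
  omega

theorem stmt19 (n : ℕ) (i j : ℕ) (hi : i ≤ 1) (hj : j ≤ 1)
    (h : apheryA n ≡ 8 * j + 4 * i + 1 [MOD 16]) :
    apheryBeta n ≡ 2 * (i + j) + 1 [MOD 4] := by
  rcases eq_or_ne n 0 with rfl | hn
  · have hA : apheryA 0 = 1 := by simp [apheryA]
    have hB : apheryBeta 0 = 1 := by simp [apheryBeta]
    rw [hA] at h
    rw [hB]
    unfold Nat.ModEq at h ⊢
    omega
  · have hXY := sum_bits n hn
    have hA' : apheryA n ≡
        1 + 4 * (∑ a ∈ range (Nat.log 2 n + 1), (n + 2^a) / 2^(a+1) % 2) [MOD 16] := by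
      rw [← ZMod.natCast_eq_natCast_iff, A_cast n hn]
      push_cast
      ring
    have hB' : apheryBeta n ≡
        1 + 2 * (∑ a ∈ range (Nat.log 2 n + 1),
          (n / 2^a % 2) * ((n + 2^a) / 2^(a+1) % 2)) [MOD 4] := by
      rw [← ZMod.natCast_eq_natCast_iff, B_cast n hn]
      push_cast
      ring
    generalize hXg : (∑ a ∈ range (Nat.log 2 n + 1), (n + 2^a) / 2^(a+1) % 2) = X at hA' hXY
    generalize hYg : (∑ a ∈ range (Nat.log 2 n + 1),
        (n / 2^a % 2) * ((n + 2^a) / 2^(a+1) % 2)) = Y at hB' hXY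
    unfold Nat.ModEq at h hA' hB' ⊢
    omega
end
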